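/- arXiv:2305.15857 — 7 statements merged into one kernel-verified Lean document; each statement's English description precedes it below -/
import Mathlib

section
/- Let Ω ⊆ ℝ³ be open, let f, g : Ω → ℝ be differentiable with f > 0 and g > 0 on Ω, and let w : Ω → ℍ be differentiable. Then w satisfies the Vekua equation Dw = (∇f/f)·star(w) + (∇g/g)·w on Ω if and only if the function u := Sc(w)/(f·g) + (f/g)·Vec(w) satisfies the quaternionic Beltrami equation Du = ((1 − f²)/(1 + f²))·D(star u) on Ω. -/
open MeasureTheory

noncomputable section

/-- The quaternion unit `i`. -/
def qi : Quaternion ℝ := ⟨0, 1, 0, 0⟩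
/-- The quaternion unit `j`. -/
def qj : Quaternion ℝ := ⟨0, 0, 1, 0⟩
/-- The quaternion unit `k`. -/
def qk : Quaternion ℝ := ⟨0, 0, 0, 1⟩

/-- Partial derivative of a quaternion-valued function on `ℝ³`. -/
def pd (i : Fin 3) (w : (Fin 3 → ℝ) → Quaternion ℝ) (x : Fin 3 → ℝ) : Quaternion ℝ :=
  fderiv ℝ w x (Pi.single i 1)

/-- Partial derivative of a real-valued function on `ℝ³`. -/
def pdR (i : Fin 3) (u : (Fin 3 → ℝ) → ℝ) (x : Fin 3 → ℝ) : ℝ :=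
  fderiv ℝ u x (Pi.single i 1)

/-- Moisil–Teodorescu operator `Dw = i ∂₁ w + j ∂₂ w + k ∂₃ w`. -/
def Dq (w : (Fin 3 → ℝ) → Quaternion ℝ) (x : Fin 3 → ℝ) : Quaternion ℝ :=
  qi * pd 0 w x + qj * pd 1 w x + qk * pd 2 w x

/-- Gradient of a real-valued function, viewed as a pure quaternion. -/
def gradq (u : (Fin 3 → ℝ) → ℝ) (x : Fin 3 → ℝ) : Quaternion ℝ :=
  ⟨0, pdR 0 u x, pdR 1 u x, pdR 2 u x⟩

/-- Laplacian of a real-valued function on `ℝ³`. -/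
def lapl (u : (Fin 3 → ℝ) → ℝ) (x : Fin 3 → ℝ) : ℝ :=
  pdR 0 (pdR 0 u) x + pdR 1 (pdR 1 u) x + pdR 2 (pdR 2 u) x

/-- Vector (non-scalar) part of a quaternion. -/
def Vecq (q : Quaternion ℝ) : Quaternion ℝ := q - (q.re : Quaternion ℝ)

/-- Divergence of the vector part of a quaternion-valued function. -/
def divVec (α : (Fin 3 → ℝ) → Quaternion ℝ) (x : Fin 3 → ℝ) : ℝ :=
  pdR 0 (fun y => (α y).imI) x + pdR 1 (fun y => (α y).imJ) x + pdR 2 (fun y => (α y).imK) x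

/-! ### Auxiliary material -/

namespace VekuaBeltramiAux

/-- Real-to-quaternion coercion as a continuous linear map. -/
def coeQL : ℝ →L[ℝ] Quaternion ℝ :=
  LinearMap.toContinuousLinearMap
    { toFun := fun r => (r : Quaternion ℝ)
      map_add' := fun a b => by push_cast; ring
      map_smul' := fun r a => by
        simp only [RingHom.id_apply, Quaternion.coe_smul] }

@[simp] lemma coeQL_apply (r : ℝ) : coeQL r = (r : Quaternion ℝ) := rfl

/-- The real part as a continuous linear map. -/
def reQL : Quaternion ℝ →L[ℝ] ℝ :=
  LinearMap.toContinuousLinearMap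
    { toFun := QuaternionAlgebra.re
      map_add' := fun a b => rfl
      map_smul' := fun r a => rfl }

@[simp] lemma reQL_apply (q : Quaternion ℝ) : reQL q = q.re := rfl

/-- Quaternion conjugation as a continuous linear map. -/
def starQL : Quaternion ℝ →L[ℝ] Quaternion ℝ :=
  LinearMap.toContinuousLinearMap
    { toFun := star
      map_add' := star_add
      map_smul' := fun r a => by simp [star_smul] }

@[simp] lemma starQL_apply (q : Quaternion ℝ) : starQL q = star q := rfl

/-- The vector part as a continuous linear map. -/
def vecQL : Quaternion ℝ →L[ℝ] Quaternion ℝ :=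
  LinearMap.toContinuousLinearMap
    { toFun := Vecq
      map_add' := fun a b => by
        simp only [Vecq, Quaternion.re_add, Quaternion.coe_add]; abel
      map_smul' := fun r a => by
        simp only [Vecq, Quaternion.re_smul, RingHom.id_apply, smul_sub, smul_eq_mul,
          Quaternion.smul_coe] }

@[simp] lemma vecQL_apply (q : Quaternion ℝ) : vecQL q = Vecq q := rfl

variable {F' : Type*} [NormedAddCommGroup F'] [NormedSpace ℝ F']
variable {G' : Type*} [NormedAddCommGroup G'] [NormedSpace ℝ G']

/-- Directional derivative as derivative along a line. -/
lemma hasDerivAt_slice {u : (Fin 3 → ℝ) → F'} {x : Fin 3 → ℝ}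
    (hu : DifferentiableAt ℝ u x) (v : Fin 3 → ℝ) :
    HasDerivAt (fun t : ℝ => u (x + t • v)) (fderiv ℝ u x v) 0 := by
  have hline : HasDerivAt (fun t : ℝ => x + t • v) v 0 := by
    simpa using ((hasDerivAt_id (0 : ℝ)).smul_const v).const_add x
  have h0 : x + (0 : ℝ) • v = x := by simp
  have hF : HasFDerivAt u (fderiv ℝ u x) (x + (0 : ℝ) • v) := by
    simpa [h0] using hu.hasFDerivAt
  exact hF.comp_hasDerivAt (0 : ℝ) hline

lemma fderiv_eq_of_slice {u : (Fin 3 → ℝ) → F'} {x v : Fin 3 → ℝ}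
    (hu : DifferentiableAt ℝ u x) {r : F'}
    (h : HasDerivAt (fun t : ℝ => u (x + t • v)) r 0) :
    fderiv ℝ u x v = r :=
  (hasDerivAt_slice hu v).unique h

lemma fderiv_clm_comp (L : F' →L[ℝ] G') {u : (Fin 3 → ℝ) → F'} {x v : Fin 3 → ℝ}
    (hu : DifferentiableAt ℝ u x) :
    fderiv ℝ (fun y => L (u y)) x v = L (fderiv ℝ u x v) := by
  have h := (L.hasFDerivAt.comp x hu.hasFDerivAt).fderiv
  have : fderiv ℝ (fun y => L (u y)) x = (L.comp (fderiv ℝ u x)) := h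
  rw [this]; rfl

section UComp

variable (f g : (Fin 3 → ℝ) → ℝ) (w : (Fin 3 → ℝ) → Quaternion ℝ) (x : Fin 3 → ℝ)

/-- The transformed function `u`. -/
def U (y : Fin 3 → ℝ) : Quaternion ℝ :=
  (((w y).re / (f y * g y) : ℝ) : Quaternion ℝ) + (f y / g y) • Vecq (w y)

variable {f g w x}

lemma diff_scal (hf : DifferentiableAt ℝ f x) (hg : DifferentiableAt ℝ g x)
    (hw : DifferentiableAt ℝ w x) (ha : f x ≠ 0) (hb : g x ≠ 0) :
    DifferentiableAt ℝ (fun y => (w y).re / (f y * g y)) x := by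
  have hre : DifferentiableAt ℝ (fun y => (w y).re) x := by
    have := (reQL.differentiableAt).comp x hw
    simpa [Function.comp_def] using this
  have h2 : DifferentiableAt ℝ (fun y => f y * g y) x := hf.mul hg
  have heq : (fun y => (w y).re / (f y * g y))
      = fun y => (w y).re * (f y * g y)⁻¹ := by
    funext y; rw [div_eq_mul_inv]
  rw [heq]
  exact hre.mul (h2.inv (mul_ne_zero ha hb))

lemma diff_quot (hf : DifferentiableAt ℝ f x) (hg : DifferentiableAt ℝ g x)
    (hb : g x ≠ 0) :
    DifferentiableAt ℝ (fun y => f y / g y) x := by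
  have heq : (fun y => f y / g y) = fun y => f y * (g y)⁻¹ := by
    funext y; rw [div_eq_mul_inv]
  rw [heq]
  exact hf.mul (hg.inv hb)

lemma diff_U (hf : DifferentiableAt ℝ f x) (hg : DifferentiableAt ℝ g x)
    (hw : DifferentiableAt ℝ w x) (ha : f x ≠ 0) (hb : g x ≠ 0) :
    DifferentiableAt ℝ (U f g w) x := by
  have h1 : DifferentiableAt ℝ (fun y => (((w y).re / (f y * g y) : ℝ) : Quaternion ℝ)) x := by
    exact (coeQL.differentiableAt).comp x (diff_scal hf hg hw ha hb)
  have h2 : DifferentiableAt ℝ (fun y => Vecq (w y)) x := by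
    have := (vecQL.differentiableAt).comp x hw
    simpa [Function.comp_def] using this
  exact h1.add ((diff_quot hf hg hb).smul h2)

/-- Explicit formula for the partial derivatives of `U`. -/
lemma pd_U (i : Fin 3) (hf : DifferentiableAt ℝ f x) (hg : DifferentiableAt ℝ g x)
    (hw : DifferentiableAt ℝ w x) (ha : f x ≠ 0) (hb : g x ≠ 0) :
    pd i (U f g w) x =
      ((((pd i w x).re * (f x * g x)
          - (w x).re * (pdR i f x * g x + f x * pdR i g x)) / (f x * g x) ^ 2 : ℝ)
        : Quaternion ℝ)
      + ((f x / g x) • Vecq (pd i w x)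
        + ((pdR i f x * g x - f x * pdR i g x) / (g x) ^ 2) • Vecq (w x)) := by
  set e : Fin 3 → ℝ := Pi.single i 1 with he
  apply fderiv_eq_of_slice (diff_U hf hg hw ha hb)
  have Hf : HasDerivAt (fun t : ℝ => f (x + t • e)) (pdR i f x) 0 :=
    hasDerivAt_slice hf e
  have Hg : HasDerivAt (fun t : ℝ => g (x + t • e)) (pdR i g x) 0 :=
    hasDerivAt_slice hg e
  have Hw : HasDerivAt (fun t : ℝ => w (x + t • e)) (pd i w x) 0 :=
    hasDerivAt_slice hw e
  have Hre : HasDerivAt (fun t : ℝ => (w (x + t • e)).re) (pd i w x).re 0 := by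
    simpa [Function.comp_def] using reQL.hasFDerivAt.comp_hasDerivAt (0 : ℝ) Hw
  have Hfg : HasDerivAt (fun t : ℝ => f (x + t • e) * g (x + t • e))
      (pdR i f x * g x + f x * pdR i g x) 0 := by
    exact (Hf.mul Hg).congr_deriv (by simp)
  have hfg0 : f (x + (0 : ℝ) • e) * g (x + (0 : ℝ) • e) ≠ 0 := by
    simpa using mul_ne_zero ha hb
  have Hdiv : HasDerivAt (fun t : ℝ => (w (x + t • e)).re / (f (x + t • e) * g (x + t • e)))
      (((pd i w x).re * (f x * g x)
        - (w x).re * (pdR i f x * g x + f x * pdR i g x)) / (f x * g x) ^ 2) 0 := by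
    have := Hre.div Hfg hfg0
    exact this.congr_deriv (by simp)
  have Hcoe : HasDerivAt
      (fun t : ℝ => (((w (x + t • e)).re / (f (x + t • e) * g (x + t • e)) : ℝ) : Quaternion ℝ))
      ((((pd i w x).re * (f x * g x)
        - (w x).re * (pdR i f x * g x + f x * pdR i g x)) / (f x * g x) ^ 2 : ℝ)
        : Quaternion ℝ) 0 := by
    exact coeQL.hasFDerivAt.comp_hasDerivAt (0 : ℝ) Hdiv
  have hgg0 : g (x + (0 : ℝ) • e) ≠ 0 := by simpa using hb
  have Hq : HasDerivAt (fun t : ℝ => f (x + t • e) / g (x + t • e))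
      ((pdR i f x * g x - f x * pdR i g x) / (g x) ^ 2) 0 := by
    have := Hf.div Hg hgg0
    exact this.congr_deriv (by simp)
  have HVec : HasDerivAt (fun t : ℝ => Vecq (w (x + t • e))) (Vecq (pd i w x)) 0 := by
    simpa [Function.comp_def] using vecQL.hasFDerivAt.comp_hasDerivAt (0 : ℝ) Hw
  have Hsmul : HasDerivAt (fun t : ℝ => (f (x + t • e) / g (x + t • e)) • Vecq (w (x + t • e)))
      ((f x / g x) • Vecq (pd i w x)
        + ((pdR i f x * g x - f x * pdR i g x) / (g x) ^ 2) • Vecq (w x)) 0 := by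
    exact (Hq.smul HVec).congr_deriv (by simp)
  exact Hcoe.add Hsmul

lemma pd_star_U (i : Fin 3) (hf : DifferentiableAt ℝ f x) (hg : DifferentiableAt ℝ g x)
    (hw : DifferentiableAt ℝ w x) (ha : f x ≠ 0) (hb : g x ≠ 0) :
    pd i (fun y => star (U f g w y)) x = star (pd i (U f g w) x) := by
  have := fderiv_clm_comp starQL (diff_U hf hg hw ha hb) (v := Pi.single i 1)
  simpa [pd] using this

end UComp

set_option maxHeartbeats 1000000 in
/-- The core algebraic identity. -/
lemma key (a b : ℝ) (ha : a ≠ 0) (hb : b ≠ 0)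
    (W p0 p1 p2 F G : Quaternion ℝ) (hF : F.re = 0) (hG : G.re = 0) :
    (qi * ((((p0.re * (a*b) - W.re*(F.imI*b + a*G.imI))/(a*b)^2 : ℝ) : Quaternion ℝ)
          + ((a/b) • Vecq p0 + ((F.imI*b - a*G.imI)/b^2) • Vecq W))
     + qj * ((((p1.re * (a*b) - W.re*(F.imJ*b + a*G.imJ))/(a*b)^2 : ℝ) : Quaternion ℝ)
          + ((a/b) • Vecq p1 + ((F.imJ*b - a*G.imJ)/b^2) • Vecq W))
     + qk * ((((p2.re * (a*b) - W.re*(F.imK*b + a*G.imK))/(a*b)^2 : ℝ) : Quaternion ℝ)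
          + ((a/b) • Vecq p2 + ((F.imK*b - a*G.imK)/b^2) • Vecq W)))
    - ((1 - a^2)/(1 + a^2)) •
      (qi * star ((((p0.re * (a*b) - W.re*(F.imI*b + a*G.imI))/(a*b)^2 : ℝ) : Quaternion ℝ)
          + ((a/b) • Vecq p0 + ((F.imI*b - a*G.imI)/b^2) • Vecq W))
     + qj * star ((((p1.re * (a*b) - W.re*(F.imJ*b + a*G.imJ))/(a*b)^2 : ℝ) : Quaternion ℝ)
          + ((a/b) • Vecq p1 + ((F.imJ*b - a*G.imJ)/b^2) • Vecq W))
     + qk * star ((((p2.re * (a*b) - W.re*(F.imK*b + a*G.imK))/(a*b)^2 : ℝ) : Quaternion ℝ)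
          + ((a/b) • Vecq p2 + ((F.imK*b - a*G.imK)/b^2) • Vecq W)))
    = (2*a/(b*(1+a^2))) •
      ((qi * p0 + qj * p1 + qk * p2)
        - (a⁻¹ • (F * star W) + b⁻¹ • (G * W))) := by
  have h1 : (1 : ℝ) + a^2 ≠ 0 := by positivity
  ext <;>
    simp only [Vecq, Quaternion.re_sub, Quaternion.imI_sub,
      Quaternion.imJ_sub, Quaternion.imK_sub, Quaternion.re_add,
      Quaternion.imI_add, Quaternion.imJ_add, Quaternion.imK_add,
      Quaternion.re_mul, Quaternion.imI_mul, Quaternion.imJ_mul,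
      Quaternion.imK_mul, Quaternion.re_smul, Quaternion.imI_smul,
      Quaternion.imJ_smul, Quaternion.imK_smul, Quaternion.re_coe,
      Quaternion.imI_coe, Quaternion.imJ_coe, Quaternion.imK_coe,
      Quaternion.re_star, Quaternion.imI_star, Quaternion.imJ_star,
      Quaternion.imK_star, hF, hG, smul_eq_mul, neg_mul, mul_neg, neg_neg, mul_zero, zero_mul,
      mul_one, one_mul, sub_zero, zero_sub, add_zero, zero_add, neg_zero] <;>
    simp only [qi, qj, qk, neg_mul, mul_neg, neg_neg, mul_zero, zero_mul,
      mul_one, one_mul, sub_zero, zero_sub, add_zero, zero_add, neg_zero] <;>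
    field_simp <;>
    ring

end VekuaBeltramiAux

/-- equivalence of the quaternionic Vekua equation
`Dw = (∇f/f)·star w + (∇g/g)·w` with the quaternionic Beltrami equation for
`u = Sc w/(fg) + (f/g)·Vec w`. -/
theorem vekua_iff_beltrami (Ω : Set (Fin 3 → ℝ)) (hΩ : IsOpen Ω)
    (f g : (Fin 3 → ℝ) → ℝ) (w : (Fin 3 → ℝ) → Quaternion ℝ)
    (hf : ∀ x ∈ Ω, DifferentiableAt ℝ f x) (hg : ∀ x ∈ Ω, DifferentiableAt ℝ g x)
    (hfpos : ∀ x ∈ Ω, 0 < f x) (hgpos : ∀ x ∈ Ω, 0 < g x)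
    (hw : ∀ x ∈ Ω, DifferentiableAt ℝ w x) :
    (∀ x ∈ Ω, Dq w x =
        (f x)⁻¹ • (gradq f x * star (w x)) + (g x)⁻¹ • (gradq g x * w x)) ↔
    (∀ x ∈ Ω,
        Dq (fun y => (((w y).re / (f y * g y) : ℝ) : Quaternion ℝ)
              + (f y / g y) • Vecq (w y)) x =
          ((1 - f x ^ 2) / (1 + f x ^ 2)) •
            Dq (fun y => star ((((w y).re / (f y * g y) : ℝ) : Quaternion ℝ)
              + (f y / g y) • Vecq (w y))) x) := by
  have main : ∀ x ∈ Ω,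
      (Dq w x = (f x)⁻¹ • (gradq f x * star (w x)) + (g x)⁻¹ • (gradq g x * w x)) ↔
      (Dq (VekuaBeltramiAux.U f g w) x =
        ((1 - f x ^ 2) / (1 + f x ^ 2)) • Dq (fun y => star (VekuaBeltramiAux.U f g w y)) x) := by
    intro x hx
    have hfx := hf x hx
    have hgx := hg x hx
    have hwx := hw x hx
    have ha : f x ≠ 0 := ne_of_gt (hfpos x hx)
    have hb : g x ≠ 0 := ne_of_gt (hgpos x hx)
    have hM : ∀ i : Fin 3, pd i (VekuaBeltramiAux.U f g w) x =
        ((((pd i w x).re * (f x * g x)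
            - (w x).re * (pdR i f x * g x + f x * pdR i g x)) / (f x * g x) ^ 2 : ℝ)
          : Quaternion ℝ)
        + ((f x / g x) • Vecq (pd i w x)
          + ((pdR i f x * g x - f x * pdR i g x) / (g x) ^ 2) • Vecq (w x)) :=
      fun i => VekuaBeltramiAux.pd_U i hfx hgx hwx ha hb
    have hS : ∀ i : Fin 3, pd i (fun y => star (VekuaBeltramiAux.U f g w y)) x = star (pd i (VekuaBeltramiAux.U f g w) x) :=
      fun i => VekuaBeltramiAux.pd_star_U i hfx hgx hwx ha hb
    have hkey := VekuaBeltramiAux.key (f x) (g x) ha hb (w x) (pd 0 w x) (pd 1 w x) (pd 2 w x)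
      (gradq f x) (gradq g x) rfl rfl
    -- identify gradq components
    have hgradf1 : (gradq f x).imI = pdR 0 f x := rfl
    have hDU : Dq (VekuaBeltramiAux.U f g w) x - ((1 - f x ^ 2) / (1 + f x ^ 2)) •
        Dq (fun y => star (VekuaBeltramiAux.U f g w y)) x
        = (2 * f x / (g x * (1 + f x ^ 2))) •
          (Dq w x - ((f x)⁻¹ • (gradq f x * star (w x)) + (g x)⁻¹ • (gradq g x * w x))) := by
      have e1 : Dq (VekuaBeltramiAux.U f g w) x = qi * pd 0 (VekuaBeltramiAux.U f g w) x + qj * pd 1 (VekuaBeltramiAux.U f g w) x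
          + qk * pd 2 (VekuaBeltramiAux.U f g w) x := rfl
      have e2 : Dq (fun y => star (VekuaBeltramiAux.U f g w y)) x
          = qi * star (pd 0 (VekuaBeltramiAux.U f g w) x) + qj * star (pd 1 (VekuaBeltramiAux.U f g w) x)
            + qk * star (pd 2 (VekuaBeltramiAux.U f g w) x) := by
        rw [Dq, hS 0, hS 1, hS 2]
      rw [e1, e2, hM 0, hM 1, hM 2]
      exact hkey
    have hc : (2 * f x / (g x * (1 + f x ^ 2))) ≠ 0 := by
      have h1 : (1 : ℝ) + f x ^ 2 ≠ 0 := by positivity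
      exact div_ne_zero (by simpa using ha) (mul_ne_zero hb h1)
    constructor
    · intro hVek
      have : Dq w x - ((f x)⁻¹ • (gradq f x * star (w x)) + (g x)⁻¹ • (gradq g x * w x)) = 0 :=
        sub_eq_zero_of_eq hVek
      rw [this, smul_zero] at hDU
      exact sub_eq_zero.mp hDU
    · intro hBel
      have h0 : (2 * f x / (g x * (1 + f x ^ 2))) •
          (Dq w x - ((f x)⁻¹ • (gradq f x * star (w x)) + (g x)⁻¹ • (gradq g x * w x))) = 0 := by
        rw [← hDU]
        exact sub_eq_zero_of_eq hBel
      rcases smul_eq_zero.mp h0 with h | h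
      · exact absurd h hc
      · exact sub_eq_zero.mp h
  constructor
  · intro H x hx
    exact (main x hx).mp (H x hx)
  · intro H x hx
    exact (main x hx).mpr (H x hx)

end
end

section
/- Let Ω ⊆ ℝ³ be open, let f, g : Ω → ℝ be differentiable with f > 0 and g > 0 on Ω, and let w : Ω → ℍ be differentiable. Then w satisfies the Vekua equation Dw = (∇f/f)·star(w) + (∇g/g)·w on Ω if and only if D( (f/g)·Vec(w) )(x) = − f(x)²·∇( Sc(w)/(f·g) )(x) for every x ∈ Ω. -/
open MeasureTheory

noncomputable section

set_option maxHeartbeats 1600000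

/-! ### Auxiliary material -/

namespace VekuaAux

abbrev HQ := Quaternion ℝ

/-- `⟨a,b,c,d⟩` as a quaternion, with an unambiguous type. -/
def mkq (a b c d : ℝ) : HQ := ⟨a, b, c, d⟩

def reCLM : HQ →L[ℝ] ℝ := LinearMap.toContinuousLinearMap (QuaternionAlgebra.reₗ (-1) 0 (-1))

def vecCLM : HQ →L[ℝ] HQ := LinearMap.toContinuousLinearMap
  (LinearMap.id - (Algebra.linearMap ℝ HQ).comp (QuaternionAlgebra.reₗ (-1) 0 (-1)))

@[simp] lemma reCLM_apply (q : HQ) : reCLM q = q.re := rfl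
@[simp] lemma vecCLM_apply (q : HQ) : vecCLM q = Vecq q := rfl

variable {x : Fin 3 → ℝ} {i : Fin 3}

lemma diff_re {w : (Fin 3 → ℝ) → HQ} (hw : DifferentiableAt ℝ w x) :
    DifferentiableAt ℝ (fun y => (w y).re) x := (reCLM.differentiableAt).comp x hw

lemma diff_vec {w : (Fin 3 → ℝ) → HQ} (hw : DifferentiableAt ℝ w x) :
    DifferentiableAt ℝ (fun y => Vecq (w y)) x := by
  have := (vecCLM.differentiableAt (x := w x)).comp x hw
  exact this

lemma pdR_re {w : (Fin 3 → ℝ) → HQ} (hw : DifferentiableAt ℝ w x) :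
    pdR i (fun y => (w y).re) x = (pd i w x).re := by
  have h : fderiv ℝ (fun y => reCLM (w y)) x = reCLM.comp (fderiv ℝ w x) :=
    (reCLM.hasFDerivAt.comp x hw.hasFDerivAt).fderiv
  simp only [reCLM_apply] at h
  simp [pdR, pd, h]

lemma pd_vec {w : (Fin 3 → ℝ) → HQ} (hw : DifferentiableAt ℝ w x) :
    pd i (fun y => Vecq (w y)) x = Vecq (pd i w x) := by
  have h : fderiv ℝ (fun y => vecCLM (w y)) x = vecCLM.comp (fderiv ℝ w x) :=
    (vecCLM.hasFDerivAt.comp x hw.hasFDerivAt).fderiv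
  simp only [vecCLM_apply] at h
  simp [pd, h]

lemma pd_smul {c : (Fin 3 → ℝ) → ℝ} {v : (Fin 3 → ℝ) → HQ}
    (hc : DifferentiableAt ℝ c x) (hv : DifferentiableAt ℝ v x) :
    pd i (fun y => c y • v y) x = pdR i c x • v x + c x • pd i v x := by
  simp only [pd, pdR, fderiv_fun_smul hc hv]
  simp [add_comm]

lemma pdR_mul {c d : (Fin 3 → ℝ) → ℝ} (hc : DifferentiableAt ℝ c x) (hd : DifferentiableAt ℝ d x) :
    pdR i (fun y => c y * d y) x = pdR i c x * d x + c x * pdR i d x := by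
  simp only [pdR, fderiv_fun_mul hc hd]
  simp; ring

lemma pdR_inv {c : (Fin 3 → ℝ) → ℝ} (hc : DifferentiableAt ℝ c x) (h0 : c x ≠ 0) :
    pdR i (fun y => (c y)⁻¹) x = -((c x) ^ 2)⁻¹ * pdR i c x := by
  have h : fderiv ℝ (fun y => (c y)⁻¹) x
      = (fderiv ℝ (fun t : ℝ => t⁻¹) (c x)).comp (fderiv ℝ c x) :=
    fderiv_comp x (differentiableAt_inv h0) hc
  simp only [pdR, h, fderiv_inv]
  simp; ring

lemma key (F G : ℝ) (hF : F ≠ 0) (hG : G ≠ 0)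
    (W p0 p1 p2 : HQ) (f0 f1 f2 g0 g1 g2 : ℝ) :
    (qi * p0 + qj * p1 + qk * p2 =
       F⁻¹ • (mkq 0 f0 f1 f2 * star W)
       + G⁻¹ • (mkq 0 g0 g1 g2 * W)) ↔
    (qi * ((f0 * G⁻¹ + F * (-(G ^ 2)⁻¹ * g0)) • Vecq W + (F * G⁻¹) • Vecq p0)
     + qj * ((f1 * G⁻¹ + F * (-(G ^ 2)⁻¹ * g1)) • Vecq W + (F * G⁻¹) • Vecq p1)
     + qk * ((f2 * G⁻¹ + F * (-(G ^ 2)⁻¹ * g2)) • Vecq W + (F * G⁻¹) • Vecq p2) =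
     -((F ^ 2) • mkq 0
        (p0.re * (F * G)⁻¹ + W.re * (-((F * G) ^ 2)⁻¹ * (f0 * G + F * g0)))
        (p1.re * (F * G)⁻¹ + W.re * (-((F * G) ^ 2)⁻¹ * (f1 * G + F * g1)))
        (p2.re * (F * G)⁻¹ + W.re * (-((F * G) ^ 2)⁻¹ * (f2 * G + F * g2))))) := by
  have main :
      (qi * ((f0 * G⁻¹ + F * (-(G ^ 2)⁻¹ * g0)) • Vecq W + (F * G⁻¹) • Vecq p0)
       + qj * ((f1 * G⁻¹ + F * (-(G ^ 2)⁻¹ * g1)) • Vecq W + (F * G⁻¹) • Vecq p1)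
       + qk * ((f2 * G⁻¹ + F * (-(G ^ 2)⁻¹ * g2)) • Vecq W + (F * G⁻¹) • Vecq p2))
      - (-((F ^ 2) • mkq 0
        (p0.re * (F * G)⁻¹ + W.re * (-((F * G) ^ 2)⁻¹ * (f0 * G + F * g0)))
        (p1.re * (F * G)⁻¹ + W.re * (-((F * G) ^ 2)⁻¹ * (f1 * G + F * g1)))
        (p2.re * (F * G)⁻¹ + W.re * (-((F * G) ^ 2)⁻¹ * (f2 * G + F * g2)))))
      = (F * G⁻¹) • ((qi * p0 + qj * p1 + qk * p2)
        - (F⁻¹ • (mkq 0 f0 f1 f2 * star W)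
           + G⁻¹ • (mkq 0 g0 g1 g2 * W))) := by
    rw [Quaternion.ext_iff]
    refine ⟨?_, ?_, ?_, ?_⟩ <;>
    · simp only [Vecq, Quaternion.re_mul, Quaternion.imI_mul,
        Quaternion.imJ_mul, Quaternion.imK_mul, Quaternion.re_add, Quaternion.imI_add,
        Quaternion.imJ_add, Quaternion.imK_add, Quaternion.re_sub, Quaternion.imI_sub,
        Quaternion.imJ_sub, Quaternion.imK_sub, Quaternion.re_neg, Quaternion.imI_neg,
        Quaternion.imJ_neg, Quaternion.imK_neg, Quaternion.re_smul, Quaternion.imI_smul,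
        Quaternion.imJ_smul, Quaternion.imK_smul, Quaternion.re_coe, Quaternion.imI_coe,
        Quaternion.imJ_coe, Quaternion.imK_coe, Quaternion.re_star, Quaternion.imI_star,
        Quaternion.imJ_star, Quaternion.imK_star, smul_eq_mul]
      simp only [qi, qj, qk, mkq]
      field_simp
      ring
  constructor
  · intro h
    rw [← sub_eq_zero, main, h, sub_self, smul_zero]
  · intro h
    rw [← sub_eq_zero] at h ⊢
    rw [main] at h
    rcases smul_eq_zero.mp h with h' | h'
    · exact absurd h' (by positivity)
    · exact h'

end VekuaAux

open VekuaAux in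
/-- `w` solves the Vekua equation `Dw = (∇f/f)·star w + (∇g/g)·w` iff
`D((f/g)·Vec w) = −f²·∇(Sc w/(fg))` on `Ω`. -/
theorem vekua_iff_system (Ω : Set (Fin 3 → ℝ)) (hΩ : IsOpen Ω)
    (f g : (Fin 3 → ℝ) → ℝ) (w : (Fin 3 → ℝ) → Quaternion ℝ)
    (hf : ∀ x ∈ Ω, DifferentiableAt ℝ f x) (hg : ∀ x ∈ Ω, DifferentiableAt ℝ g x)
    (hfpos : ∀ x ∈ Ω, 0 < f x) (hgpos : ∀ x ∈ Ω, 0 < g x)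
    (hw : ∀ x ∈ Ω, DifferentiableAt ℝ w x) :
    (∀ x ∈ Ω, Dq w x =
        (f x)⁻¹ • (gradq f x * star (w x)) + (g x)⁻¹ • (gradq g x * w x)) ↔
    (∀ x ∈ Ω, Dq (fun y => (f y / g y) • Vecq (w y)) x =
        -((f x ^ 2) • gradq (fun y => (w y).re / (f y * g y)) x)) := by
  have hmain : ∀ x ∈ Ω,
      ((Dq w x = (f x)⁻¹ • (gradq f x * star (w x)) + (g x)⁻¹ • (gradq g x * w x)) ↔
       (Dq (fun y => (f y / g y) • Vecq (w y)) x =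
        -((f x ^ 2) • gradq (fun y => (w y).re / (f y * g y)) x))) := by
    intro x hx
    have hF : f x ≠ 0 := (hfpos x hx).ne'
    have hG : g x ≠ 0 := (hgpos x hx).ne'
    have hFG : f x * g x ≠ 0 := mul_ne_zero hF hG
    have hfd := hf x hx
    have hgd := hg x hx
    have hwd := hw x hx
    have hfun1 : (fun y => (f y / g y) • Vecq (w y))
        = fun y => (f y * (g y)⁻¹) • Vecq (w y) := by
      funext y; rw [div_eq_mul_inv]
    have hfun2 : (fun y => (w y).re / (f y * g y))
        = fun y => (w y).re * (f y * g y)⁻¹ := by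
      funext y; rw [div_eq_mul_inv]
    have hc : DifferentiableAt ℝ (fun y => f y * (g y)⁻¹) x := hfd.mul (hgd.inv hG)
    have hv : DifferentiableAt ℝ (fun y => Vecq (w y)) x := diff_vec hwd
    have hfg : DifferentiableAt ℝ (fun y => f y * g y) x := hfd.mul hgd
    simp only [Dq, gradq, hfun1, hfun2]
    simp only [pd_smul hc hv, pd_vec hwd,
        pdR_mul (d := fun y => (g y)⁻¹) hfd (hgd.inv hG), pdR_inv hgd hG,
        pdR_mul (d := fun y => (f y * g y)⁻¹) (diff_re hwd) (hfg.inv hFG), pdR_inv hfg hFG,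
        pdR_mul hfd hgd, pdR_re hwd]
    exact key (f x) (g x) hF hG (w x) (pd 0 w x) (pd 1 w x) (pd 2 w x)
      (pdR 0 f x) (pdR 1 f x) (pdR 2 f x) (pdR 0 g x) (pdR 1 g x) (pdR 2 g x)
  constructor
  · intro h x hx; exact (hmain x hx).mp (h x hx)
  · intro h x hx; exact (hmain x hx).mpr (h x hx)

end
end

section
/- Let Ω ⊆ ℝ³ be open, let f, g : Ω → ℝ be twice continuously differentiable with f > 0 and g > 0 on Ω, and let w : Ω → ℍ be twice continuously differentiable. If w satisfies Dw = (∇f/f)·star(w) + (∇g/g)·w on Ω, then the scalar function Sc(w)/(f·g) satisfies the conductivity equation div( f²·∇( Sc(w)/(f·g) ) ) = 0 on Ω. -/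
open MeasureTheory

noncomputable section

namespace VAux
variable {φ ψ : (Fin 3 → ℝ) → ℝ} {x : Fin 3 → ℝ} {i j : Fin 3}

theorem pdR_mul (hφ : DifferentiableAt ℝ φ x) (hψ : DifferentiableAt ℝ ψ x) :
    pdR i (fun y => φ y * ψ y) x = pdR i φ x * ψ x + φ x * pdR i ψ x := by
  unfold pdR
  rw [fderiv_fun_mul hφ hψ]
  simp [ContinuousLinearMap.add_apply, ContinuousLinearMap.smul_apply, smul_eq_mul]
  ring

theorem pdR_sub (hφ : DifferentiableAt ℝ φ x) (hψ : DifferentiableAt ℝ ψ x) :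
    pdR i (fun y => φ y - ψ y) x = pdR i φ x - pdR i ψ x := by
  unfold pdR
  rw [fderiv_fun_sub hφ hψ]; simp

theorem pdR_inv (hφ : DifferentiableAt ℝ φ x) (h0 : φ x ≠ 0) :
    pdR i (fun y => (φ y)⁻¹) x = -(φ x ^ 2)⁻¹ * pdR i φ x := by
  have h : HasFDerivAt (fun y => (φ y)⁻¹)
      ((ContinuousLinearMap.smulRight 1 (-(φ x ^ 2)⁻¹)).comp (fderiv ℝ φ x)) x :=
    (hasFDerivAt_inv h0).comp x hφ.hasFDerivAt
  unfold pdR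
  rw [h.fderiv]
  simp [mul_comm]

theorem contDiffAt_pdR (hφ : ContDiffAt ℝ 2 φ x) : ContDiffAt ℝ 1 (pdR j φ) x := by
  have h1 : ContDiffAt ℝ 1 (fderiv ℝ φ) x := hφ.fderiv_right (by norm_num)
  exact ((ContinuousLinearMap.apply ℝ ℝ (Pi.single j 1)).contDiff.contDiffAt).comp x h1

theorem diffAt_pdR (hφ : ContDiffAt ℝ 2 φ x) : DifferentiableAt ℝ (pdR j φ) x :=
  (contDiffAt_pdR hφ).differentiableAt one_ne_zero

theorem pdR_symm {φ : (Fin 3 → ℝ) → ℝ} {x : Fin 3 → ℝ} (hφ : ContDiffAt ℝ 2 φ x) (i j : Fin 3) :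
    pdR i (pdR j φ) x = pdR j (pdR i φ) x := by
  have h1 : ContDiffAt ℝ 1 (fderiv ℝ φ) x := hφ.fderiv_right (by norm_num)
  have h2 : DifferentiableAt ℝ (fderiv ℝ φ) x := h1.differentiableAt one_ne_zero
  have hev : ∀ᶠ y in nhds x, HasFDerivAt φ (fderiv ℝ φ y) y := by
    filter_upwards [hφ.eventually (by norm_num)] with y hy
    exact (hy.differentiableAt (by norm_num)).hasFDerivAt
  have hsymm := second_derivative_symmetric_of_eventually hev h2.hasFDerivAt
  have key : ∀ a b : Fin 3,
      pdR a (pdR b φ) x = fderiv ℝ (fderiv ℝ φ) x (Pi.single a 1) (Pi.single b 1) := by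
    intro a b
    have hc := ((ContinuousLinearMap.apply ℝ ℝ (Pi.single b 1)).hasFDerivAt.comp x h2.hasFDerivAt)
    unfold pdR
    rw [show (fun z => (fderiv ℝ φ z) (Pi.single b 1)) =
      ⇑((ContinuousLinearMap.apply ℝ ℝ) (Pi.single b 1)) ∘ fderiv ℝ φ from rfl, hc.fderiv]
    rfl
  rw [key i j, key j i, hsymm]

def reC : Quaternion ℝ →L[ℝ] ℝ := LinearMap.toContinuousLinearMap (QuaternionAlgebra.reₗ _ _ _)
def imIC : Quaternion ℝ →L[ℝ] ℝ := LinearMap.toContinuousLinearMap (QuaternionAlgebra.imIₗ _ _ _)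
def imJC : Quaternion ℝ →L[ℝ] ℝ := LinearMap.toContinuousLinearMap (QuaternionAlgebra.imJₗ _ _ _)
def imKC : Quaternion ℝ →L[ℝ] ℝ := LinearMap.toContinuousLinearMap (QuaternionAlgebra.imKₗ _ _ _)

theorem pd_eq {w : (Fin 3 → ℝ) → Quaternion ℝ} {y : Fin 3 → ℝ}
    (hw : DifferentiableAt ℝ w y) (i : Fin 3) :
    pd i w y = ⟨pdR i (fun z => (w z).re) y, pdR i (fun z => (w z).imI) y,
      pdR i (fun z => (w z).imJ) y, pdR i (fun z => (w z).imK) y⟩ := by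
  have hre := (reC.hasFDerivAt.comp y hw.hasFDerivAt :
    HasFDerivAt (fun z => (w z).re) (reC.comp (fderiv ℝ w y)) y)
  have himI := (imIC.hasFDerivAt.comp y hw.hasFDerivAt :
    HasFDerivAt (fun z => (w z).imI) (imIC.comp (fderiv ℝ w y)) y)
  have himJ := (imJC.hasFDerivAt.comp y hw.hasFDerivAt :
    HasFDerivAt (fun z => (w z).imJ) (imJC.comp (fderiv ℝ w y)) y)
  have himK := (imKC.hasFDerivAt.comp y hw.hasFDerivAt :
    HasFDerivAt (fun z => (w z).imK) (imKC.comp (fderiv ℝ w y)) y)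
  have e1 : pdR i (fun z => (w z).re) y = reC ((fderiv ℝ w y) (Pi.single i 1)) := by
    show fderiv ℝ (⇑reC ∘ w) y (Pi.single i 1) = _
    rw [hre.fderiv]; rfl
  have e2 : pdR i (fun z => (w z).imI) y = imIC ((fderiv ℝ w y) (Pi.single i 1)) := by
    show fderiv ℝ (⇑imIC ∘ w) y (Pi.single i 1) = _
    rw [himI.fderiv]; rfl
  have e3 : pdR i (fun z => (w z).imJ) y = imJC ((fderiv ℝ w y) (Pi.single i 1)) := by
    show fderiv ℝ (⇑imJC ∘ w) y (Pi.single i 1) = _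
    rw [himJ.fderiv]; rfl
  have e4 : pdR i (fun z => (w z).imK) y = imKC ((fderiv ℝ w y) (Pi.single i 1)) := by
    show fderiv ℝ (⇑imKC ∘ w) y (Pi.single i 1) = _
    rw [himK.fderiv]; rfl
  ext
  · exact e1.symm
  · exact e2.symm
  · exact e3.symm
  · exact e4.symm
end VAux

set_option maxHeartbeats 3200000 in
theorem identity_lemma (f g p q r : (Fin 3 → ℝ) → ℝ) (x : Fin 3 → ℝ)
    (hf : ContDiffAt ℝ 2 f x) (hg : ContDiffAt ℝ 2 g x)
    (hp : ContDiffAt ℝ 2 p x) (hq : ContDiffAt ℝ 2 q x) (hr : ContDiffAt ℝ 2 r x)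
    (hf0 : f x ≠ 0) (hg0 : g x ≠ 0) :
    pdR 0 (fun y => f y * (g y)⁻¹ *
      ((pdR 1 g y * (g y)⁻¹ - pdR 1 f y * (f y)⁻¹) * r y
       - (pdR 2 g y * (g y)⁻¹ - pdR 2 f y * (f y)⁻¹) * q y
       - (pdR 1 r y - pdR 2 q y))) x
    + pdR 1 (fun y => f y * (g y)⁻¹ *
      ((pdR 2 g y * (g y)⁻¹ - pdR 2 f y * (f y)⁻¹) * p y
       - (pdR 0 g y * (g y)⁻¹ - pdR 0 f y * (f y)⁻¹) * r y
       - (pdR 2 p y - pdR 0 r y))) x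
    + pdR 2 (fun y => f y * (g y)⁻¹ *
      ((pdR 0 g y * (g y)⁻¹ - pdR 0 f y * (f y)⁻¹) * q y
       - (pdR 1 g y * (g y)⁻¹ - pdR 1 f y * (f y)⁻¹) * p y
       - (pdR 0 q y - pdR 1 p y))) x = 0 := by
  have Df : DifferentiableAt ℝ f x := hf.differentiableAt (by norm_num)
  have Df0 : DifferentiableAt ℝ (pdR 0 f) x := VAux.diffAt_pdR hf
  have Df1 : DifferentiableAt ℝ (pdR 1 f) x := VAux.diffAt_pdR hf
  have Df2 : DifferentiableAt ℝ (pdR 2 f) x := VAux.diffAt_pdR hf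
  have Dg : DifferentiableAt ℝ g x := hg.differentiableAt (by norm_num)
  have Dg0 : DifferentiableAt ℝ (pdR 0 g) x := VAux.diffAt_pdR hg
  have Dg1 : DifferentiableAt ℝ (pdR 1 g) x := VAux.diffAt_pdR hg
  have Dg2 : DifferentiableAt ℝ (pdR 2 g) x := VAux.diffAt_pdR hg
  have Dp : DifferentiableAt ℝ p x := hp.differentiableAt (by norm_num)
  have Dp0 : DifferentiableAt ℝ (pdR 0 p) x := VAux.diffAt_pdR hp
  have Dp1 : DifferentiableAt ℝ (pdR 1 p) x := VAux.diffAt_pdR hp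
  have Dp2 : DifferentiableAt ℝ (pdR 2 p) x := VAux.diffAt_pdR hp
  have Dq : DifferentiableAt ℝ q x := hq.differentiableAt (by norm_num)
  have Dq0 : DifferentiableAt ℝ (pdR 0 q) x := VAux.diffAt_pdR hq
  have Dq1 : DifferentiableAt ℝ (pdR 1 q) x := VAux.diffAt_pdR hq
  have Dq2 : DifferentiableAt ℝ (pdR 2 q) x := VAux.diffAt_pdR hq
  have Dr : DifferentiableAt ℝ r x := hr.differentiableAt (by norm_num)
  have Dr0 : DifferentiableAt ℝ (pdR 0 r) x := VAux.diffAt_pdR hr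
  have Dr1 : DifferentiableAt ℝ (pdR 1 r) x := VAux.diffAt_pdR hr
  have Dr2 : DifferentiableAt ℝ (pdR 2 r) x := VAux.diffAt_pdR hr
  simp (disch := first | assumption | fun_prop (disch := assumption)) only
    [VAux.pdR_mul, VAux.pdR_sub, VAux.pdR_inv]
  simp only [VAux.pdR_symm hf 1 0, VAux.pdR_symm hf 2 0, VAux.pdR_symm hf 2 1, VAux.pdR_symm hg 1 0, VAux.pdR_symm hg 2 0, VAux.pdR_symm hg 2 1, VAux.pdR_symm hp 1 0, VAux.pdR_symm hp 2 0, VAux.pdR_symm hp 2 1, VAux.pdR_symm hq 1 0, VAux.pdR_symm hq 2 0, VAux.pdR_symm hq 2 1, VAux.pdR_symm hr 1 0, VAux.pdR_symm hr 2 0, VAux.pdR_symm hr 2 1]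
  field_simp
  ring


set_option maxHeartbeats 3200000 in
/-- if `w` solves the Vekua equation `Dw = (∇f/f)·star w + (∇g/g)·w`,
then `Sc w/(fg)` solves the conductivity equation `div(f²∇(Sc w/(fg))) = 0`. -/
theorem vekua_implies_conductivity (Ω : Set (Fin 3 → ℝ)) (hΩ : IsOpen Ω)
    (f g : (Fin 3 → ℝ) → ℝ) (w : (Fin 3 → ℝ) → Quaternion ℝ)
    (hf : ContDiffOn ℝ 2 f Ω) (hg : ContDiffOn ℝ 2 g Ω)
    (hfpos : ∀ x ∈ Ω, 0 < f x) (hgpos : ∀ x ∈ Ω, 0 < g x)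
    (hw : ContDiffOn ℝ 2 w Ω)
    (hVekua : ∀ x ∈ Ω, Dq w x =
        (f x)⁻¹ • (gradq f x * star (w x)) + (g x)⁻¹ • (gradq g x * w x)) :
    ∀ x ∈ Ω,
      ∑ i : Fin 3,
        pdR i (fun y => f y ^ 2 * pdR i (fun z => (w z).re / (f z * g z)) y) x = 0 := by
  intro x hx
  have hΩx : Ω ∈ nhds x := hΩ.mem_nhds hx
  have hfx : ContDiffAt ℝ 2 f x := hf.contDiffAt hΩx
  have hgx : ContDiffAt ℝ 2 g x := hg.contDiffAt hΩx
  have hwx : ContDiffAt ℝ 2 w x := hw.contDiffAt hΩx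
  have hpx : ContDiffAt ℝ 2 (fun z => (w z).imI) x :=
    (VAux.imIC.contDiff.contDiffAt).comp x hwx
  have hqx : ContDiffAt ℝ 2 (fun z => (w z).imJ) x :=
    (VAux.imJC.contDiff.contDiffAt).comp x hwx
  have hrx : ContDiffAt ℝ 2 (fun z => (w z).imK) x :=
    (VAux.imKC.contDiff.contDiffAt).comp x hwx
  have key0 : ∀ y ∈ Ω, f y ^ 2 * pdR 0 (fun z => (w z).re / (f z * g z)) y =
      (fun y => f y * (g y)⁻¹ *
      ((pdR 1 g y * (g y)⁻¹ - pdR 1 f y * (f y)⁻¹) * (w y).imK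
       - (pdR 2 g y * (g y)⁻¹ - pdR 2 f y * (f y)⁻¹) * (w y).imJ
       - (pdR 1 (fun z => (w z).imK) y - pdR 2 (fun z => (w z).imJ) y))) y := by
    intro y hy
    have hΩy : Ω ∈ nhds y := hΩ.mem_nhds hy
    have hfy : DifferentiableAt ℝ f y := (hf.contDiffAt hΩy).differentiableAt (by norm_num)
    have hgy : DifferentiableAt ℝ g y := (hg.contDiffAt hΩy).differentiableAt (by norm_num)
    have hwy : DifferentiableAt ℝ w y := (hw.contDiffAt hΩy).differentiableAt (by norm_num)
    have hf0 : f y ≠ 0 := (hfpos y hy).ne'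
    have hg0 : g y ≠ 0 := (hgpos y hy).ne'
    have hfg0 : f y * g y ≠ 0 := mul_ne_zero hf0 hg0
    have Du : DifferentiableAt ℝ (fun z => (w z).re) y :=
      (VAux.reC.differentiable.differentiableAt.comp y hwy :
        DifferentiableAt ℝ (fun z => (w z).re) y)
    have h1 := congrArg QuaternionAlgebra.imI (hVekua y hy)
    simp only [Dq, Quaternion.imI_add,
      Quaternion.imI_mul, Quaternion.imI_smul, Quaternion.re_star,
      Quaternion.imI_star, Quaternion.imJ_star, Quaternion.imK_star, smul_eq_mul] at h1
    simp only [VAux.pd_eq hwy, qi, qj, qk, gradq] at h1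
    have hu0 : pdR 0 (fun z => (w z).re) y =
        (f y)⁻¹ * (pdR 0 f y * (w y).re - pdR 1 f y * (w y).imK + pdR 2 f y * (w y).imJ)
        + (g y)⁻¹ * (pdR 0 g y * (w y).re + pdR 1 g y * (w y).imK - pdR 2 g y * (w y).imJ)
        - pdR 1 (fun z => (w z).imK) y + pdR 2 (fun z => (w z).imJ) y := by
      linear_combination h1
    rw [show (fun z => (w z).re / (f z * g z)) = (fun z => (w z).re * (f z * g z)⁻¹)
      from funext fun z => div_eq_mul_inv _ _]
    beta_reduce
    have hfg : DifferentiableAt ℝ (fun z => f z * g z) y := hfy.mul hgy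
    have hinv : DifferentiableAt ℝ (fun z => (f z * g z)⁻¹) y := by
      fun_prop (disch := assumption)
    rw [VAux.pdR_mul Du hinv, VAux.pdR_inv hfg hfg0, VAux.pdR_mul hfy hgy]
    rw [hu0]
    field_simp
    ring
  have key1 : ∀ y ∈ Ω, f y ^ 2 * pdR 1 (fun z => (w z).re / (f z * g z)) y =
      (fun y => f y * (g y)⁻¹ *
      ((pdR 2 g y * (g y)⁻¹ - pdR 2 f y * (f y)⁻¹) * (w y).imI
       - (pdR 0 g y * (g y)⁻¹ - pdR 0 f y * (f y)⁻¹) * (w y).imK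
       - (pdR 2 (fun z => (w z).imI) y - pdR 0 (fun z => (w z).imK) y))) y := by
    intro y hy
    have hΩy : Ω ∈ nhds y := hΩ.mem_nhds hy
    have hfy : DifferentiableAt ℝ f y := (hf.contDiffAt hΩy).differentiableAt (by norm_num)
    have hgy : DifferentiableAt ℝ g y := (hg.contDiffAt hΩy).differentiableAt (by norm_num)
    have hwy : DifferentiableAt ℝ w y := (hw.contDiffAt hΩy).differentiableAt (by norm_num)
    have hf0 : f y ≠ 0 := (hfpos y hy).ne'
    have hg0 : g y ≠ 0 := (hgpos y hy).ne'
    have hfg0 : f y * g y ≠ 0 := mul_ne_zero hf0 hg0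
    have Du : DifferentiableAt ℝ (fun z => (w z).re) y :=
      (VAux.reC.differentiable.differentiableAt.comp y hwy :
        DifferentiableAt ℝ (fun z => (w z).re) y)
    have h1 := congrArg QuaternionAlgebra.imJ (hVekua y hy)
    simp only [Dq, Quaternion.imJ_add,
      Quaternion.imJ_mul, Quaternion.imJ_smul, Quaternion.re_star,
      Quaternion.imI_star, Quaternion.imJ_star, Quaternion.imK_star, smul_eq_mul] at h1
    simp only [VAux.pd_eq hwy, qi, qj, qk, gradq] at h1
    have hu1 : pdR 1 (fun z => (w z).re) y =
        (f y)⁻¹ * (pdR 0 f y * (w y).imK + pdR 1 f y * (w y).re - pdR 2 f y * (w y).imI)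
        + (g y)⁻¹ * (-(pdR 0 g y * (w y).imK) + pdR 1 g y * (w y).re + pdR 2 g y * (w y).imI)
        + pdR 0 (fun z => (w z).imK) y - pdR 2 (fun z => (w z).imI) y := by
      linear_combination h1
    rw [show (fun z => (w z).re / (f z * g z)) = (fun z => (w z).re * (f z * g z)⁻¹)
      from funext fun z => div_eq_mul_inv _ _]
    beta_reduce
    have hfg : DifferentiableAt ℝ (fun z => f z * g z) y := hfy.mul hgy
    have hinv : DifferentiableAt ℝ (fun z => (f z * g z)⁻¹) y := by
      fun_prop (disch := assumption)
    rw [VAux.pdR_mul Du hinv, VAux.pdR_inv hfg hfg0, VAux.pdR_mul hfy hgy]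
    rw [hu1]
    field_simp
    ring
  have key2 : ∀ y ∈ Ω, f y ^ 2 * pdR 2 (fun z => (w z).re / (f z * g z)) y =
      (fun y => f y * (g y)⁻¹ *
      ((pdR 0 g y * (g y)⁻¹ - pdR 0 f y * (f y)⁻¹) * (w y).imJ
       - (pdR 1 g y * (g y)⁻¹ - pdR 1 f y * (f y)⁻¹) * (w y).imI
       - (pdR 0 (fun z => (w z).imJ) y - pdR 1 (fun z => (w z).imI) y))) y := by
    intro y hy
    have hΩy : Ω ∈ nhds y := hΩ.mem_nhds hy
    have hfy : DifferentiableAt ℝ f y := (hf.contDiffAt hΩy).differentiableAt (by norm_num)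
    have hgy : DifferentiableAt ℝ g y := (hg.contDiffAt hΩy).differentiableAt (by norm_num)
    have hwy : DifferentiableAt ℝ w y := (hw.contDiffAt hΩy).differentiableAt (by norm_num)
    have hf0 : f y ≠ 0 := (hfpos y hy).ne'
    have hg0 : g y ≠ 0 := (hgpos y hy).ne'
    have hfg0 : f y * g y ≠ 0 := mul_ne_zero hf0 hg0
    have Du : DifferentiableAt ℝ (fun z => (w z).re) y :=
      (VAux.reC.differentiable.differentiableAt.comp y hwy :
        DifferentiableAt ℝ (fun z => (w z).re) y)
    have h1 := congrArg QuaternionAlgebra.imK (hVekua y hy)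
    simp only [Dq, Quaternion.imK_add,
      Quaternion.imK_mul, Quaternion.imK_smul, Quaternion.re_star,
      Quaternion.imI_star, Quaternion.imJ_star, Quaternion.imK_star, smul_eq_mul] at h1
    simp only [VAux.pd_eq hwy, qi, qj, qk, gradq] at h1
    have hu2 : pdR 2 (fun z => (w z).re) y =
        (f y)⁻¹ * (-(pdR 0 f y * (w y).imJ) + pdR 1 f y * (w y).imI + pdR 2 f y * (w y).re)
        + (g y)⁻¹ * (pdR 0 g y * (w y).imJ - pdR 1 g y * (w y).imI + pdR 2 g y * (w y).re)
        - pdR 0 (fun z => (w z).imJ) y + pdR 1 (fun z => (w z).imI) y := by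
      linear_combination h1
    rw [show (fun z => (w z).re / (f z * g z)) = (fun z => (w z).re * (f z * g z)⁻¹)
      from funext fun z => div_eq_mul_inv _ _]
    beta_reduce
    have hfg : DifferentiableAt ℝ (fun z => f z * g z) y := hfy.mul hgy
    have hinv : DifferentiableAt ℝ (fun z => (f z * g z)⁻¹) y := by
      fun_prop (disch := assumption)
    rw [VAux.pdR_mul Du hinv, VAux.pdR_inv hfg hfg0, VAux.pdR_mul hfy hgy]
    rw [hu2]
    field_simp
    ring
  have e0 : pdR 0 (fun y => f y ^ 2 * pdR 0 (fun z => (w z).re / (f z * g z)) y) x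
      = pdR 0 (fun y => f y * (g y)⁻¹ *
      ((pdR 1 g y * (g y)⁻¹ - pdR 1 f y * (f y)⁻¹) * (w y).imK
       - (pdR 2 g y * (g y)⁻¹ - pdR 2 f y * (f y)⁻¹) * (w y).imJ
       - (pdR 1 (fun z => (w z).imK) y - pdR 2 (fun z => (w z).imJ) y))) x := by
    unfold pdR
    congr 1
    apply Filter.EventuallyEq.fderiv_eq
    filter_upwards [hΩx] with y hy using key0 y hy
  have e1 : pdR 1 (fun y => f y ^ 2 * pdR 1 (fun z => (w z).re / (f z * g z)) y) x
      = pdR 1 (fun y => f y * (g y)⁻¹ *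
      ((pdR 2 g y * (g y)⁻¹ - pdR 2 f y * (f y)⁻¹) * (w y).imI
       - (pdR 0 g y * (g y)⁻¹ - pdR 0 f y * (f y)⁻¹) * (w y).imK
       - (pdR 2 (fun z => (w z).imI) y - pdR 0 (fun z => (w z).imK) y))) x := by
    unfold pdR
    congr 1
    apply Filter.EventuallyEq.fderiv_eq
    filter_upwards [hΩx] with y hy using key1 y hy
  have e2 : pdR 2 (fun y => f y ^ 2 * pdR 2 (fun z => (w z).re / (f z * g z)) y) x
      = pdR 2 (fun y => f y * (g y)⁻¹ *
      ((pdR 0 g y * (g y)⁻¹ - pdR 0 f y * (f y)⁻¹) * (w y).imJ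
       - (pdR 1 g y * (g y)⁻¹ - pdR 1 f y * (f y)⁻¹) * (w y).imI
       - (pdR 0 (fun z => (w z).imJ) y - pdR 1 (fun z => (w z).imI) y))) x := by
    unfold pdR
    congr 1
    apply Filter.EventuallyEq.fderiv_eq
    filter_upwards [hΩx] with y hy using key2 y hy
  rw [Fin.sum_univ_three, e0, e1, e2]
  exact identity_lemma f g (fun z => (w z).imI) (fun z => (w z).imJ) (fun z => (w z).imK) x
    hfx hgx hpx hqx hrx (hfpos x hx).ne' (hgpos x hx).ne'


end
end

section
/- Let Ω ⊆ ℝ³ be open, let f, g : Ω → ℝ be twice continuously differentiable with f > 0 and g > 0 on Ω, and let w : Ω → ℍ be twice continuously differentiable. If w satisfies Dw = (∇f/f)·star(w) + (∇g/g)·w on Ω, then the scalar function Sc(w)/g satisfies the Schrödinger equation Δ( Sc(w)/g ) − (Δf/f)·( Sc(w)/g ) = 0 on Ω. -/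
open MeasureTheory

noncomputable section

/-! ### Auxiliary lemmas -/

section Aux

theorem vk_qi_re : qi.re = 0 := rfl
theorem vk_qi_imI : qi.imI = 1 := rfl
theorem vk_qi_imJ : qi.imJ = 0 := rfl
theorem vk_qi_imK : qi.imK = 0 := rfl
theorem vk_qj_re : qj.re = 0 := rfl
theorem vk_qj_imI : qj.imI = 0 := rfl
theorem vk_qj_imJ : qj.imJ = 1 := rfl
theorem vk_qj_imK : qj.imK = 0 := rfl
theorem vk_qk_re : qk.re = 0 := rfl
theorem vk_qk_imI : qk.imI = 0 := rfl
theorem vk_qk_imJ : qk.imJ = 0 := rfl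
theorem vk_qk_imK : qk.imK = 1 := rfl
theorem vk_gradq_re (u x) : (gradq u x).re = 0 := rfl
theorem vk_gradq_imI (u x) : (gradq u x).imI = pdR 0 u x := rfl
theorem vk_gradq_imJ (u x) : (gradq u x).imJ = pdR 1 u x := rfl
theorem vk_gradq_imK (u x) : (gradq u x).imK = pdR 2 u x := rfl

def reCLM : Quaternion ℝ →L[ℝ] ℝ :=
  LinearMap.toContinuousLinearMap (QuaternionAlgebra.reₗ (-1:ℝ) 0 (-1) : Quaternion ℝ →ₗ[ℝ] ℝ)
def imICLM : Quaternion ℝ →L[ℝ] ℝ :=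
  LinearMap.toContinuousLinearMap (QuaternionAlgebra.imIₗ (-1:ℝ) 0 (-1) : Quaternion ℝ →ₗ[ℝ] ℝ)
def imJCLM : Quaternion ℝ →L[ℝ] ℝ :=
  LinearMap.toContinuousLinearMap (QuaternionAlgebra.imJₗ (-1:ℝ) 0 (-1) : Quaternion ℝ →ₗ[ℝ] ℝ)
def imKCLM : Quaternion ℝ →L[ℝ] ℝ :=
  LinearMap.toContinuousLinearMap (QuaternionAlgebra.imKₗ (-1:ℝ) 0 (-1) : Quaternion ℝ →ₗ[ℝ] ℝ)

variable {u v p q r s t p' q' r' s' t' u' F G : (Fin 3 → ℝ) → ℝ}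
  {w : (Fin 3 → ℝ) → Quaternion ℝ} {x : Fin 3 → ℝ} {i j : Fin 3} {Ω : Set (Fin 3 → ℝ)}

theorem vk_congr (hΩ : IsOpen Ω) (hx : x ∈ Ω) (huv : ∀ y ∈ Ω, u y = v y) :
    pdR i u x = pdR i v x := by
  unfold pdR
  rw [Filter.EventuallyEq.fderiv_eq ((hΩ.eventually_mem hx).mono huv)]

theorem vk_add (hu : DifferentiableAt ℝ u x) (hv : DifferentiableAt ℝ v x) :
    pdR i (fun y => u y + v y) x = pdR i u x + pdR i v x := by
  unfold pdR; rw [fderiv_fun_add hu hv]; simp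

theorem vk_sub (hu : DifferentiableAt ℝ u x) (hv : DifferentiableAt ℝ v x) :
    pdR i (fun y => u y - v y) x = pdR i u x - pdR i v x := by
  unfold pdR; rw [fderiv_fun_sub hu hv]; simp

theorem vk_mul (hu : DifferentiableAt ℝ u x) (hv : DifferentiableAt ℝ v x) :
    pdR i (fun y => u y * v y) x = pdR i u x * v x + u x * pdR i v x := by
  unfold pdR; rw [fderiv_fun_mul hu hv]; simp; ring

theorem vk_div (hu : DifferentiableAt ℝ u x) (hv : DifferentiableAt ℝ v x) (hv0 : v x ≠ 0) :
    pdR i (fun y => u y / v y) x = (pdR i u x * v x - u x * pdR i v x) / (v x)^2 := by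
  have h : ∀ y, u y / v y = u y * (v y)⁻¹ := fun y => div_eq_mul_inv _ _
  simp only [h]
  have hinv : pdR i (fun y => (v y)⁻¹) x = -pdR i v x / (v x)^2 := by
    unfold pdR
    rw [show (fun y => (v y)⁻¹) = (fun t : ℝ => t⁻¹) ∘ v from rfl,
      fderiv_comp x (differentiableAt_inv hv0) hv]
    simp [fderiv_inv]
    field_simp
  rw [vk_mul (v := fun y => (v y)⁻¹) hu (hv.inv hv0), hinv]
  field_simp
  ring

theorem vk_sq (hv : DifferentiableAt ℝ v x) :
    pdR i (fun y => (v y)^2) x = 2 * v x * pdR i v x := by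
  rw [show (fun y => (v y)^2) = fun y => v y * v y by funext y; ring, vk_mul hv hv]
  ring

theorem vk_diffAt {E : Type*} [NormedAddCommGroup E] [NormedSpace ℝ E]
    {φ : (Fin 3 → ℝ) → E} (hΩ : IsOpen Ω) (hu : ContDiffOn ℝ 2 φ Ω) (hx : x ∈ Ω) :
    DifferentiableAt ℝ φ x :=
  (hu.differentiableOn (by norm_num)).differentiableAt (hΩ.mem_nhds hx)

theorem vk_diffAt_pdR (hΩ : IsOpen Ω) (hu : ContDiffOn ℝ 2 u Ω) (hx : x ∈ Ω) :
    DifferentiableAt ℝ (pdR i u) x := by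
  have hat : ContDiffAt ℝ 2 u x := hu.contDiffAt (hΩ.mem_nhds hx)
  have hd : DifferentiableAt ℝ (fderiv ℝ u) x :=
    (hat.fderiv_right (m := 1) (by norm_num)).differentiableAt (by norm_num)
  exact hd.clm_apply (differentiableAt_const _)

theorem vk_symm (hΩ : IsOpen Ω) (hx : x ∈ Ω) (hu : ContDiffOn ℝ 2 u Ω) :
    pdR i (pdR j u) x = pdR j (pdR i u) x := by
  have hat : ContDiffAt ℝ 2 u x := hu.contDiffAt (hΩ.mem_nhds hx)
  have hd : DifferentiableAt ℝ (fderiv ℝ u) x :=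
    (hat.fderiv_right (m := 1) (by norm_num)).differentiableAt (by norm_num)
  have hsym := hat.isSymmSndFDerivAt (by norm_num)
  have key : ∀ k l : Fin 3, pdR k (pdR l u) x
      = fderiv ℝ (fderiv ℝ u) x (Pi.single k 1) (Pi.single l 1) := by
    intro k l
    unfold pdR
    rw [fderiv_clm_apply hd (differentiableAt_const _)]
    simp
  rw [key, key, hsym.eq]

theorem vk_trio (hp : DifferentiableAt ℝ p x) (hq : DifferentiableAt ℝ q x)
    (hr : DifferentiableAt ℝ r x) (hs : DifferentiableAt ℝ s x)
    (ht : DifferentiableAt ℝ t x) (hu : DifferentiableAt ℝ u x) :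
    pdR i (fun y => p y * q y - r y * s y + t y * u y) x
      = (pdR i p x * q x + p x * pdR i q x) - (pdR i r x * s x + r x * pdR i s x)
        + (pdR i t x * u x + t x * pdR i u x) := by
  rw [vk_add (by fun_prop) (by fun_prop), vk_sub (by fun_prop) (by fun_prop),
    vk_mul hp hq, vk_mul hr hs, vk_mul ht hu]

theorem vk_lhs (hF : DifferentiableAt ℝ F x) (hG : DifferentiableAt ℝ G x)
    (hp : DifferentiableAt ℝ p x) (hq : DifferentiableAt ℝ q x)
    (hr : DifferentiableAt ℝ r x) :
    pdR i (fun y => F y * (G y * (p y + q y - r y))) x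
      = pdR i F x * (G x * (p x + q x - r x))
        + F x * (pdR i G x * (p x + q x - r x)
          + G x * (pdR i p x + pdR i q x - pdR i r x)) := by
  rw [vk_mul hF (by fun_prop), vk_mul hG (by fun_prop), vk_sub (by fun_prop) hr,
    vk_add hp hq]

theorem vk_rhs (hG : DifferentiableAt ℝ G x) (hF : DifferentiableAt ℝ F x)
    (hp : DifferentiableAt ℝ p x) (hq : DifferentiableAt ℝ q x)
    (hr : DifferentiableAt ℝ r x) (hs : DifferentiableAt ℝ s x)
    (ht : DifferentiableAt ℝ t x) (hu : DifferentiableAt ℝ u x)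
    (hp' : DifferentiableAt ℝ p' x) (hq' : DifferentiableAt ℝ q' x)
    (hr' : DifferentiableAt ℝ r' x) (hs' : DifferentiableAt ℝ s' x)
    (ht' : DifferentiableAt ℝ t' x) (hu' : DifferentiableAt ℝ u' x) :
    pdR i (fun y => G y * (p y * q y - r y * s y + t y * u y)
        + F y * (p' y * q' y - r' y * s' y + t' y * u' y)) x
      = pdR i G x * (p x * q x - r x * s x + t x * u x)
        + G x * ((pdR i p x * q x + p x * pdR i q x) - (pdR i r x * s x + r x * pdR i s x)
          + (pdR i t x * u x + t x * pdR i u x))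
        + (pdR i F x * (p' x * q' x - r' x * s' x + t' x * u' x)
        + F x * ((pdR i p' x * q' x + p' x * pdR i q' x) - (pdR i r' x * s' x + r' x * pdR i s' x)
          + (pdR i t' x * u' x + t' x * pdR i u' x))) := by
  rw [vk_add (by fun_prop) (by fun_prop), vk_mul hG (by fun_prop), vk_mul hF (by fun_prop),
    vk_trio hp hq hr hs ht hu, vk_trio hp' hq' hr' hs' ht' hu']

theorem vk_pd_re (hw : DifferentiableAt ℝ w x) :
    (pd i w x).re = pdR i (fun y => (w y).re) x := by
  unfold pdR pd
  rw [show (fun y => (w y).re) = ⇑reCLM ∘ w from rfl,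
    fderiv_comp x reCLM.differentiableAt hw, ContinuousLinearMap.fderiv]
  rfl
theorem vk_pd_imI (hw : DifferentiableAt ℝ w x) :
    (pd i w x).imI = pdR i (fun y => (w y).imI) x := by
  unfold pdR pd
  rw [show (fun y => (w y).imI) = ⇑imICLM ∘ w from rfl,
    fderiv_comp x imICLM.differentiableAt hw, ContinuousLinearMap.fderiv]
  rfl
theorem vk_pd_imJ (hw : DifferentiableAt ℝ w x) :
    (pd i w x).imJ = pdR i (fun y => (w y).imJ) x := by
  unfold pdR pd
  rw [show (fun y => (w y).imJ) = ⇑imJCLM ∘ w from rfl,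
    fderiv_comp x imJCLM.differentiableAt hw, ContinuousLinearMap.fderiv]
  rfl
theorem vk_pd_imK (hw : DifferentiableAt ℝ w x) :
    (pd i w x).imK = pdR i (fun y => (w y).imK) x := by
  unfold pdR pd
  rw [show (fun y => (w y).imK) = ⇑imKCLM ∘ w from rfl,
    fderiv_comp x imKCLM.differentiableAt hw, ContinuousLinearMap.fderiv]
  rfl

theorem vk_cd_re (hw : ContDiffOn ℝ 2 w Ω) : ContDiffOn ℝ 2 (fun y => (w y).re) Ω :=
  reCLM.contDiff.comp_contDiffOn hw
theorem vk_cd_imI (hw : ContDiffOn ℝ 2 w Ω) : ContDiffOn ℝ 2 (fun y => (w y).imI) Ω :=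
  imICLM.contDiff.comp_contDiffOn hw
theorem vk_cd_imJ (hw : ContDiffOn ℝ 2 w Ω) : ContDiffOn ℝ 2 (fun y => (w y).imJ) Ω :=
  imJCLM.contDiff.comp_contDiffOn hw
theorem vk_cd_imK (hw : ContDiffOn ℝ 2 w Ω) : ContDiffOn ℝ 2 (fun y => (w y).imK) Ω :=
  imKCLM.contDiff.comp_contDiffOn hw

end Aux

/-- if `w` solves the Vekua equation `Dw = (∇f/f)·star w + (∇g/g)·w`,
then `Sc w/g` solves the Schrödinger equation `Δ(Sc w/g) − (Δf/f)(Sc w/g) = 0`. -/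
theorem vekua_implies_schrodinger (Ω : Set (Fin 3 → ℝ)) (hΩ : IsOpen Ω)
    (f g : (Fin 3 → ℝ) → ℝ) (w : (Fin 3 → ℝ) → Quaternion ℝ)
    (hf : ContDiffOn ℝ 2 f Ω) (hg : ContDiffOn ℝ 2 g Ω)
    (hfpos : ∀ x ∈ Ω, 0 < f x) (hgpos : ∀ x ∈ Ω, 0 < g x)
    (hw : ContDiffOn ℝ 2 w Ω)
    (hVekua : ∀ x ∈ Ω, Dq w x =
        (f x)⁻¹ • (gradq f x * star (w x)) + (g x)⁻¹ • (gradq g x * w x)) :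
    ∀ x ∈ Ω,
      lapl (fun y => (w y).re / g y) x
        - (lapl f x / f x) * ((w x).re / g x) = 0 := by
  intro x hx
  -- continuous differentiability of the components
  have hA : ContDiffOn ℝ 2 (fun y => (w y).re) Ω := vk_cd_re hw
  have hB : ContDiffOn ℝ 2 (fun y => (w y).imI) Ω := vk_cd_imI hw
  have hC : ContDiffOn ℝ 2 (fun y => (w y).imJ) Ω := vk_cd_imJ hw
  have hD : ContDiffOn ℝ 2 (fun y => (w y).imK) Ω := vk_cd_imK hw
  -- nonvanishing
  have hf0 : f x ≠ 0 := (hfpos x hx).ne'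
  have hg0 : g x ≠ 0 := (hgpos x hx).ne'
  -- basic differentiability at x
  have hdf : DifferentiableAt ℝ f x := vk_diffAt hΩ hf hx
  have hdg : DifferentiableAt ℝ g x := vk_diffAt hΩ hg hx
  have hdA : DifferentiableAt ℝ (fun y => (w y).re) x := vk_diffAt hΩ hA hx
  have hdB : DifferentiableAt ℝ (fun y => (w y).imI) x := vk_diffAt hΩ hB hx
  have hdC : DifferentiableAt ℝ (fun y => (w y).imJ) x := vk_diffAt hΩ hC hx
  have hdD : DifferentiableAt ℝ (fun y => (w y).imK) x := vk_diffAt hΩ hD hx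
  -- differentiability of first partial derivatives at x
  have hdf' : ∀ i : Fin 3, DifferentiableAt ℝ (pdR i f) x :=
    fun i => vk_diffAt_pdR hΩ hf hx
  have hdg' : ∀ i : Fin 3, DifferentiableAt ℝ (pdR i g) x :=
    fun i => vk_diffAt_pdR hΩ hg hx
  have hdA' : ∀ i : Fin 3, DifferentiableAt ℝ (pdR i (fun y => (w y).re)) x :=
    fun i => vk_diffAt_pdR hΩ hA hx
  have hdB' : ∀ i : Fin 3, DifferentiableAt ℝ (pdR i (fun y => (w y).imI)) x :=
    fun i => vk_diffAt_pdR hΩ hB hx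
  have hdC' : ∀ i : Fin 3, DifferentiableAt ℝ (pdR i (fun y => (w y).imJ)) x :=
    fun i => vk_diffAt_pdR hΩ hC hx
  have hdD' : ∀ i : Fin 3, DifferentiableAt ℝ (pdR i (fun y => (w y).imK)) x :=
    fun i => vk_diffAt_pdR hΩ hD hx
  -- the three (cleared) component equations of the Vekua equation, valid on all of Ω
  have hE1 : ∀ y ∈ Ω, f y * (g y * (pdR 0 (fun z => (w z).re) y
        + pdR 1 (fun z => (w z).imK) y - pdR 2 (fun z => (w z).imJ) y))
      = g y * (pdR 0 f y * (w y).re - pdR 1 f y * (w y).imK + pdR 2 f y * (w y).imJ)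
        + f y * (pdR 0 g y * (w y).re - pdR 2 g y * (w y).imJ + pdR 1 g y * (w y).imK) := by
    intro y hy
    have hwy : DifferentiableAt ℝ w y := vk_diffAt hΩ hw hy
    have h1 := congrArg QuaternionAlgebra.imI (hVekua y hy)
    simp only [Dq, Quaternion.imI_add, Quaternion.imI_mul, Quaternion.imI_smul, smul_eq_mul,
      Quaternion.re_star, Quaternion.imI_star, Quaternion.imJ_star, Quaternion.imK_star,
      vk_qi_re, vk_qi_imI, vk_qi_imJ, vk_qi_imK, vk_qj_re, vk_qj_imI, vk_qj_imJ, vk_qj_imK,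
      vk_qk_re, vk_qk_imI, vk_qk_imJ, vk_qk_imK,
      vk_gradq_re, vk_gradq_imI, vk_gradq_imJ, vk_gradq_imK,
      vk_pd_re hwy, vk_pd_imI hwy, vk_pd_imJ hwy, vk_pd_imK hwy] at h1
    have hfy : f y ≠ 0 := (hfpos y hy).ne'
    have hgy : g y ≠ 0 := (hgpos y hy).ne'
    field_simp at h1 ⊢
    linear_combination h1
  have hE2 : ∀ y ∈ Ω, f y * (g y * (pdR 1 (fun z => (w z).re) y
        + pdR 2 (fun z => (w z).imI) y - pdR 0 (fun z => (w z).imK) y))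
      = g y * (pdR 1 f y * (w y).re - pdR 2 f y * (w y).imI + pdR 0 f y * (w y).imK)
        + f y * (pdR 1 g y * (w y).re - pdR 0 g y * (w y).imK + pdR 2 g y * (w y).imI) := by
    intro y hy
    have hwy : DifferentiableAt ℝ w y := vk_diffAt hΩ hw hy
    have h1 := congrArg QuaternionAlgebra.imJ (hVekua y hy)
    simp only [Dq, Quaternion.imJ_add, Quaternion.imJ_mul, Quaternion.imJ_smul, smul_eq_mul,
      Quaternion.re_star, Quaternion.imI_star, Quaternion.imJ_star, Quaternion.imK_star,
      vk_qi_re, vk_qi_imI, vk_qi_imJ, vk_qi_imK, vk_qj_re, vk_qj_imI, vk_qj_imJ, vk_qj_imK,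
      vk_qk_re, vk_qk_imI, vk_qk_imJ, vk_qk_imK,
      vk_gradq_re, vk_gradq_imI, vk_gradq_imJ, vk_gradq_imK,
      vk_pd_re hwy, vk_pd_imI hwy, vk_pd_imJ hwy, vk_pd_imK hwy] at h1
    have hfy : f y ≠ 0 := (hfpos y hy).ne'
    have hgy : g y ≠ 0 := (hgpos y hy).ne'
    field_simp at h1 ⊢
    linear_combination h1
  have hE3 : ∀ y ∈ Ω, f y * (g y * (pdR 2 (fun z => (w z).re) y
        + pdR 0 (fun z => (w z).imJ) y - pdR 1 (fun z => (w z).imI) y))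
      = g y * (pdR 2 f y * (w y).re - pdR 0 f y * (w y).imJ + pdR 1 f y * (w y).imI)
        + f y * (pdR 2 g y * (w y).re - pdR 1 g y * (w y).imI + pdR 0 g y * (w y).imJ) := by
    intro y hy
    have hwy : DifferentiableAt ℝ w y := vk_diffAt hΩ hw hy
    have h1 := congrArg QuaternionAlgebra.imK (hVekua y hy)
    simp only [Dq, Quaternion.imK_add, Quaternion.imK_mul, Quaternion.imK_smul, smul_eq_mul,
      Quaternion.re_star, Quaternion.imI_star, Quaternion.imJ_star, Quaternion.imK_star,
      vk_qi_re, vk_qi_imI, vk_qi_imJ, vk_qi_imK, vk_qj_re, vk_qj_imI, vk_qj_imJ, vk_qj_imK,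
      vk_qk_re, vk_qk_imI, vk_qk_imJ, vk_qk_imK,
      vk_gradq_re, vk_gradq_imI, vk_gradq_imJ, vk_gradq_imK,
      vk_pd_re hwy, vk_pd_imI hwy, vk_pd_imJ hwy, vk_pd_imK hwy] at h1
    have hfy : f y ≠ 0 := (hfpos y hy).ne'
    have hgy : g y ≠ 0 := (hgpos y hy).ne'
    field_simp at h1 ⊢
    linear_combination h1
  -- differentiate the component equations
  have hK1 : pdR 0 (fun y => f y * (g y * (pdR 0 (fun z => (w z).re) y
        + pdR 1 (fun z => (w z).imK) y - pdR 2 (fun z => (w z).imJ) y))) x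
      = pdR 0 (fun y => g y * (pdR 0 f y * (w y).re - pdR 1 f y * (w y).imK
          + pdR 2 f y * (w y).imJ)
        + f y * (pdR 0 g y * (w y).re - pdR 2 g y * (w y).imJ
          + pdR 1 g y * (w y).imK)) x := by
    exact vk_congr hΩ hx (fun y hy => by rw [hE1 y hy])
  have hK2 : pdR 1 (fun y => f y * (g y * (pdR 1 (fun z => (w z).re) y
        + pdR 2 (fun z => (w z).imI) y - pdR 0 (fun z => (w z).imK) y))) x
      = pdR 1 (fun y => g y * (pdR 1 f y * (w y).re - pdR 2 f y * (w y).imI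
          + pdR 0 f y * (w y).imK)
        + f y * (pdR 1 g y * (w y).re - pdR 0 g y * (w y).imK
          + pdR 2 g y * (w y).imI)) x := by
    exact vk_congr hΩ hx (fun y hy => by rw [hE2 y hy])
  have hK3 : pdR 2 (fun y => f y * (g y * (pdR 2 (fun z => (w z).re) y
        + pdR 0 (fun z => (w z).imJ) y - pdR 1 (fun z => (w z).imI) y))) x
      = pdR 2 (fun y => g y * (pdR 2 f y * (w y).re - pdR 0 f y * (w y).imJ
          + pdR 1 f y * (w y).imI)
        + f y * (pdR 2 g y * (w y).re - pdR 1 g y * (w y).imI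
          + pdR 0 g y * (w y).imJ)) x := by
    exact vk_congr hΩ hx (fun y hy => by rw [hE3 y hy])
  -- expand the differentiated equations
  rw [vk_lhs hdf hdg (hdA' 0) (hdD' 1) (hdC' 2),
    vk_rhs hdg hdf (hdf' 0) hdA (hdf' 1) hdD (hdf' 2) hdC
      (hdg' 0) hdA (hdg' 2) hdC (hdg' 1) hdD] at hK1
  rw [vk_lhs hdf hdg (hdA' 1) (hdB' 2) (hdD' 0),
    vk_rhs hdg hdf (hdf' 1) hdA (hdf' 2) hdB (hdf' 0) hdD
      (hdg' 1) hdA (hdg' 0) hdD (hdg' 2) hdB] at hK2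
  rw [vk_lhs hdf hdg (hdA' 2) (hdC' 0) (hdB' 1),
    vk_rhs hdg hdf (hdf' 2) hdA (hdf' 0) hdC (hdf' 1) hdB
      (hdg' 2) hdA (hdg' 1) hdB (hdg' 0) hdC] at hK3
  -- canonicalize mixed second partial derivatives
  rw [vk_symm hΩ hx hD (i := 1) (j := 0), vk_symm hΩ hx hf (i := 1) (j := 0),
    vk_symm hΩ hx hg (i := 1) (j := 0)] at hK2
  rw [vk_symm hΩ hx hC (i := 2) (j := 0), vk_symm hΩ hx hB (i := 2) (j := 1),
    vk_symm hΩ hx hf (i := 2) (j := 0), vk_symm hΩ hx hf (i := 2) (j := 1),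
    vk_symm hΩ hx hg (i := 2) (j := 0), vk_symm hΩ hx hg (i := 2) (j := 1)] at hK3
  -- the key identity
  have key : f x * (g x)^2 * (pdR 0 (pdR 0 (fun z => (w z).re)) x
        + pdR 1 (pdR 1 (fun z => (w z).re)) x + pdR 2 (pdR 2 (fun z => (w z).re)) x)
      = (g x)^2 * (w x).re * (pdR 0 (pdR 0 f) x + pdR 1 (pdR 1 f) x + pdR 2 (pdR 2 f) x)
        + f x * g x * (w x).re * (pdR 0 (pdR 0 g) x + pdR 1 (pdR 1 g) x + pdR 2 (pdR 2 g) x)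
        + 2 * f x * g x * (pdR 0 g x * pdR 0 (fun z => (w z).re) x
          + pdR 1 g x * pdR 1 (fun z => (w z).re) x + pdR 2 g x * pdR 2 (fun z => (w z).re) x)
        - 2 * f x * (w x).re * ((pdR 0 g x)^2 + (pdR 1 g x)^2 + (pdR 2 g x)^2) := by
    linear_combination g x * (hK1 + hK2 + hK3)
      - 2 * (pdR 0 g x * hE1 x hx + pdR 1 g x * hE2 x hx + pdR 2 g x * hE3 x hx)
  -- expand the goal
  have hnum : ∀ i : Fin 3, DifferentiableAt ℝ
      (fun y => pdR i (fun z => (w z).re) y * g y - (w y).re * pdR i g y) x := by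
    intro i
    exact ((hdA' i).mul hdg).sub (hdA.mul (hdg' i))
  have hsq : DifferentiableAt ℝ (fun y => (g y)^2) x := hdg.pow 2
  have hsq0 : (g x)^2 ≠ 0 := pow_ne_zero _ hg0
  have hGoal : ∀ i : Fin 3, pdR i (pdR i (fun y => (w y).re / g y)) x
      = ((pdR i (pdR i (fun z => (w z).re)) x * g x + pdR i (fun z => (w z).re) x * pdR i g x
          - (pdR i (fun z => (w z).re) x * pdR i g x + (w x).re * pdR i (pdR i g) x)) * (g x)^2
        - (pdR i (fun z => (w z).re) x * g x - (w x).re * pdR i g x)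
          * (2 * g x * pdR i g x)) / ((g x)^2)^2 := by
    intro i
    have hq : ∀ y ∈ Ω, pdR i (fun z => (w z).re / g z) y
        = (pdR i (fun z => (w z).re) y * g y - (w y).re * pdR i g y) / (g y)^2 := by
      intro y hy
      exact vk_div (vk_diffAt hΩ hA hy) (vk_diffAt hΩ hg hy) (hgpos y hy).ne'
    have h2 : pdR i (pdR i (fun y => (w y).re / g y)) x
        = pdR i (fun y => (pdR i (fun z => (w z).re) y * g y - (w y).re * pdR i g y)
            / (g y)^2) x := vk_congr hΩ hx (fun y hy => by rw [hq y hy])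
    rw [h2, vk_div (hnum i) hsq hsq0, vk_sub (u := fun y => pdR i (fun z => (w z).re) y * g y)
      (v := fun y => (w y).re * pdR i g y) ((hdA' i).mul hdg) (hdA.mul (hdg' i)),
      vk_mul (hdA' i) hdg, vk_mul hdA (hdg' i), vk_sq hdg]
  simp only [lapl]
  rw [hGoal 0, hGoal 1, hGoal 2]
  field_simp
  linear_combination key

end
end

section
/- Let Ω ⊆ ℝ³ be open, let f, g : Ω → ℝ be twice continuously differentiable with f > 0 and g > 0 on Ω, set α := ∇f/f and β := ∇g/g, and let h₀ : Ω → ℝ be twice differentiable. Define v := ∇h₀ − h₀·α − h₀·star(β). Then for every x ∈ Ω: Sc( Dv(x) − α(x)·star(v(x)) − β(x)·v(x) ) = −Δh₀(x) + ( Δf(x)/f(x) − Δg(x)/g(x) + 2·(∇g/g)(x)·( (∇g/g)(x) − (∇f/f)(x) ) )·h₀(x), where · between gradients denotes the Euclidean dot product on ℝ³. -/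
open MeasureTheory

noncomputable section

/- Auxiliary lemmas -/

lemma qmk_smul (s a b c d : ℝ) :
    @HSMul.hSMul ℝ (Quaternion ℝ) (Quaternion ℝ) _ s ⟨a, b, c, d⟩ = ⟨s * a, s * b, s * c, s * d⟩ := rfl

lemma qmk_star (a b c d : ℝ) :
    @star (Quaternion ℝ) _ ⟨a, b, c, d⟩ = ⟨a, -b, -c, -d⟩ := by
  have h1 := Quaternion.re_star (⟨a, b, c, d⟩ : Quaternion ℝ)
  have h2 := Quaternion.imI_star (⟨a, b, c, d⟩ : Quaternion ℝ)
  have h3 := Quaternion.imJ_star (⟨a, b, c, d⟩ : Quaternion ℝ)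
  have h4 := Quaternion.imK_star (⟨a, b, c, d⟩ : Quaternion ℝ)
  ext
  · exact h1
  · exact h2
  · exact h3
  · exact h4

lemma qmk_add (a b c d a' b' c' d' : ℝ) :
    @HAdd.hAdd (Quaternion ℝ) (Quaternion ℝ) (Quaternion ℝ) _ ⟨a, b, c, d⟩ ⟨a', b', c', d'⟩
      = ⟨a + a', b + b', c + c', d + d'⟩ := rfl

lemma qmk_sub (a b c d a' b' c' d' : ℝ) :
    @HSub.hSub (Quaternion ℝ) (Quaternion ℝ) (Quaternion ℝ) _ ⟨a, b, c, d⟩ ⟨a', b', c', d'⟩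
      = ⟨a - a', b - b', c - c', d - d'⟩ := rfl

lemma qmk_mul (a b c d a' b' c' d' : ℝ) :
    @HMul.hMul (Quaternion ℝ) (Quaternion ℝ) (Quaternion ℝ) _ ⟨a, b, c, d⟩ ⟨a', b', c', d'⟩
      = ⟨a * a' - b * b' - c * c' - d * d', a * b' + b * a' + c * d' - d * c',
         a * c' - b * d' + c * a' + d * b', a * d' + b * c' - c * b' + d * a'⟩ := by
  have h1 := Quaternion.re_mul (⟨a, b, c, d⟩ : Quaternion ℝ) ⟨a', b', c', d'⟩
  have h2 := Quaternion.imI_mul (⟨a, b, c, d⟩ : Quaternion ℝ) ⟨a', b', c', d'⟩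
  have h3 := Quaternion.imJ_mul (⟨a, b, c, d⟩ : Quaternion ℝ) ⟨a', b', c', d'⟩
  have h4 := Quaternion.imK_mul (⟨a, b, c, d⟩ : Quaternion ℝ) ⟨a', b', c', d'⟩
  ext
  · exact h1
  · exact h2
  · exact h3
  · exact h4

lemma pd_mk (a b c : (Fin 3 → ℝ) → ℝ) (x : Fin 3 → ℝ) (i : Fin 3)
    (ha : DifferentiableAt ℝ a x) (hb : DifferentiableAt ℝ b x) (hc : DifferentiableAt ℝ c x) :
    pd i (fun y => (⟨0, a y, b y, c y⟩ : Quaternion ℝ)) x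
      = ⟨0, pdR i a x, pdR i b x, pdR i c x⟩ := by
  have h : (fun y => (⟨0, a y, b y, c y⟩ : Quaternion ℝ))
      = fun y => a y • qi + b y • qj + c y • qk := by
    funext y; ext <;> simp [qi, qj, qk, qmk_smul, qmk_star, qmk_add, qmk_sub, qmk_mul]
  unfold pd; rw [h]
  rw [fderiv_fun_add ((ha.smul_const qi).fun_add (hb.smul_const qj)) (hc.smul_const qk),
      fderiv_fun_add (ha.smul_const qi) (hb.smul_const qj),
      fderiv_smul_const ha, fderiv_smul_const hb, fderiv_smul_const hc]
  ext <;> simp [pdR] <;> simp [qi, qj, qk, qmk_smul, qmk_star, qmk_add, qmk_sub, qmk_mul]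

lemma Dq_re_mk (a b c : (Fin 3 → ℝ) → ℝ) (x : Fin 3 → ℝ)
    (ha : DifferentiableAt ℝ a x) (hb : DifferentiableAt ℝ b x) (hc : DifferentiableAt ℝ c x) :
    (Dq (fun y => (⟨0, a y, b y, c y⟩ : Quaternion ℝ)) x).re
      = -(pdR 0 a x + pdR 1 b x + pdR 2 c x) := by
  unfold Dq; rw [pd_mk a b c x 0 ha hb hc, pd_mk a b c x 1 ha hb hc, pd_mk a b c x 2 ha hb hc]
  simp [qi, qj, qk, qmk_smul, qmk_star, qmk_add, qmk_sub, qmk_mul]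
  ring

lemma pdR_mul (i : Fin 3) {u w : (Fin 3 → ℝ) → ℝ} {x} (hu : DifferentiableAt ℝ u x)
    (hw : DifferentiableAt ℝ w x) :
    pdR i (fun y => u y * w y) x = pdR i u x * w x + u x * pdR i w x := by
  unfold pdR; rw [fderiv_fun_mul hu hw]; simp; ring

lemma pdR_inv (i : Fin 3) {u : (Fin 3 → ℝ) → ℝ} {x} (hu : DifferentiableAt ℝ u x)
    (hx : u x ≠ 0) :
    pdR i (fun y => (u y)⁻¹) x = -(u x ^ 2)⁻¹ * pdR i u x := by
  unfold pdR
  rw [show (fun y => (u y)⁻¹) = Inv.inv ∘ u from rfl,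
    fderiv_comp x (differentiableAt_inv hx) hu]
  simp [fderiv_inv, mul_comm]

lemma pdR_add (i : Fin 3) {u w : (Fin 3 → ℝ) → ℝ} {x} (hu : DifferentiableAt ℝ u x)
    (hw : DifferentiableAt ℝ w x) :
    pdR i (fun y => u y + w y) x = pdR i u x + pdR i w x := by
  unfold pdR; rw [fderiv_fun_add hu hw]; simp

lemma pdR_sub (i : Fin 3) {u w : (Fin 3 → ℝ) → ℝ} {x} (hu : DifferentiableAt ℝ u x)
    (hw : DifferentiableAt ℝ w x) :
    pdR i (fun y => u y - w y) x = pdR i u x - pdR i w x := by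
  unfold pdR; rw [fderiv_fun_sub hu hw]; simp

lemma pdR_diffAt {u : (Fin 3 → ℝ) → ℝ} {x} (j : Fin 3) (hu : ContDiffAt ℝ 2 u x) :
    DifferentiableAt ℝ (pdR j u) x := by
  have h1 : ContDiffAt ℝ 1 (fderiv ℝ u) x := hu.fderiv_right (by norm_num)
  exact (h1.differentiableAt one_ne_zero).clm_apply (differentiableAt_const _)

lemma pdR_term (i j : Fin 3) {h u : (Fin 3 → ℝ) → ℝ} {x}
    (hh : DifferentiableAt ℝ h x) (hu2 : ContDiffAt ℝ 2 u x) (hux : u x ≠ 0) :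
    pdR i (fun y => h y * ((u y)⁻¹ * pdR j u y)) x
      = pdR i h x * ((u x)⁻¹ * pdR j u x)
        + h x * (-(u x ^ 2)⁻¹ * pdR i u x * pdR j u x + (u x)⁻¹ * pdR i (pdR j u) x) := by
  have hud : DifferentiableAt ℝ u x := hu2.differentiableAt (by norm_num)
  have hinv : DifferentiableAt ℝ (fun y => (u y)⁻¹) x := hud.inv hux
  have hpd : DifferentiableAt ℝ (pdR j u) x := pdR_diffAt j hu2
  rw [pdR_mul i hh (hinv.fun_mul hpd), pdR_mul i hinv hpd, pdR_inv i hud hux]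

set_option maxHeartbeats 2000000 in
/-- for `α = ∇f/f`, `β = ∇g/g`, the factorized Schrödinger operator takes
the form `−Δ + Δf/f − Δg/g + 2 (∇g/g)·((∇g/g) − (∇f/f))`. -/
theorem factorization_gradlog (Ω : Set (Fin 3 → ℝ)) (hΩ : IsOpen Ω)
    (f g : (Fin 3 → ℝ) → ℝ)
    (hf : ContDiffOn ℝ 2 f Ω) (hg : ContDiffOn ℝ 2 g Ω)
    (hfpos : ∀ x ∈ Ω, 0 < f x) (hgpos : ∀ x ∈ Ω, 0 < g x)
    (h₀ : (Fin 3 → ℝ) → ℝ)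
    (hh₀ : ∀ x ∈ Ω, DifferentiableAt ℝ h₀ x)
    (hh₀' : ∀ x ∈ Ω, DifferentiableAt ℝ (fderiv ℝ h₀) x) :
    ∀ x ∈ Ω,
      (Dq (fun y => gradq h₀ y - h₀ y • ((f y)⁻¹ • gradq f y)
            - h₀ y • star ((g y)⁻¹ • gradq g y)) x
          - ((f x)⁻¹ • gradq f x) *
              star (gradq h₀ x - h₀ x • ((f x)⁻¹ • gradq f x)
                - h₀ x • star ((g x)⁻¹ • gradq g x))
          - ((g x)⁻¹ • gradq g x) *
              (gradq h₀ x - h₀ x • ((f x)⁻¹ • gradq f x)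
                - h₀ x • star ((g x)⁻¹ • gradq g x))).re =
        -lapl h₀ x +
          (lapl f x / f x - lapl g x / g x
            + 2 * ∑ i : Fin 3,
                (pdR i g x / g x) * (pdR i g x / g x - pdR i f x / f x)) * h₀ x := by
  intro x hx
  have hfx : f x ≠ 0 := (hfpos x hx).ne'
  have hgx : g x ≠ 0 := (hgpos x hx).ne'
  have hf2 : ContDiffAt ℝ 2 f x := hf.contDiffAt (hΩ.mem_nhds hx)
  have hg2 : ContDiffAt ℝ 2 g x := hg.contDiffAt (hΩ.mem_nhds hx)
  have hfd : DifferentiableAt ℝ f x := hf2.differentiableAt (by norm_num)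
  have hgd : DifferentiableAt ℝ g x := hg2.differentiableAt (by norm_num)
  have hh₀x : DifferentiableAt ℝ h₀ x := hh₀ x hx
  set V : Fin 3 → (Fin 3 → ℝ) → ℝ := fun j y =>
    pdR j h₀ y - h₀ y * ((f y)⁻¹ * pdR j f y) + h₀ y * ((g y)⁻¹ * pdR j g y) with hV
  have hpdh : ∀ j : Fin 3, DifferentiableAt ℝ (pdR j h₀) x := fun j =>
    (hh₀' x hx).clm_apply (differentiableAt_const _)
  have hVd : ∀ j : Fin 3, DifferentiableAt ℝ (V j) x := fun j =>
    ((hpdh j).sub (hh₀x.mul ((hfd.inv hfx).mul (pdR_diffAt j hf2)))).add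
      (hh₀x.mul ((hgd.inv hgx).mul (pdR_diffAt j hg2)))
  have hfun : (fun y => gradq h₀ y - h₀ y • ((f y)⁻¹ • gradq f y)
      - h₀ y • star ((g y)⁻¹ • gradq g y))
      = fun y => (⟨0, V 0 y, V 1 y, V 2 y⟩ : Quaternion ℝ) := by
    funext y; ext <;> simp [gradq, hV, qmk_smul, qmk_star, qmk_add, qmk_sub, qmk_mul] <;> ring
  have hfunx : gradq h₀ x - h₀ x • ((f x)⁻¹ • gradq f x)
      - h₀ x • star ((g x)⁻¹ • gradq g x) = (⟨0, V 0 x, V 1 x, V 2 x⟩ : Quaternion ℝ) := by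
    ext <;> simp [gradq, hV, qmk_smul, qmk_star, qmk_add, qmk_sub, qmk_mul] <;> ring
  rw [hfun, hfunx, Quaternion.re_sub, Quaternion.re_sub,
    Dq_re_mk (V 0) (V 1) (V 2) x (hVd 0) (hVd 1) (hVd 2)]
  -- compute the diagonal partial derivatives of V
  have hdiag : ∀ j : Fin 3, pdR j (V j) x
      = pdR j (pdR j h₀) x
        - (pdR j h₀ x * ((f x)⁻¹ * pdR j f x)
            + h₀ x * (-(f x ^ 2)⁻¹ * pdR j f x * pdR j f x + (f x)⁻¹ * pdR j (pdR j f) x))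
        + (pdR j h₀ x * ((g x)⁻¹ * pdR j g x)
            + h₀ x * (-(g x ^ 2)⁻¹ * pdR j g x * pdR j g x + (g x)⁻¹ * pdR j (pdR j g) x)) := by
    intro j
    have hA : DifferentiableAt ℝ (fun y => h₀ y * ((f y)⁻¹ * pdR j f y)) x :=
      hh₀x.mul ((hfd.inv hfx).mul (pdR_diffAt j hf2))
    have hB : DifferentiableAt ℝ (fun y => h₀ y * ((g y)⁻¹ * pdR j g y)) x :=
      hh₀x.mul ((hgd.inv hgx).mul (pdR_diffAt j hg2))
    have : pdR j (V j) x
        = pdR j (fun y => pdR j h₀ y - h₀ y * ((f y)⁻¹ * pdR j f y)) x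
          + pdR j (fun y => h₀ y * ((g y)⁻¹ * pdR j g y)) x :=
      pdR_add j ((hpdh j).sub hA) hB
    rw [this, pdR_sub j (hpdh j) hA, pdR_term j j hh₀x hf2 hfx, pdR_term j j hh₀x hg2 hgx]
  -- compute the scalar parts of the two products
  have hVx : ∀ j : Fin 3, V j x
      = pdR j h₀ x - h₀ x * ((f x)⁻¹ * pdR j f x) + h₀ x * ((g x)⁻¹ * pdR j g x) := fun j => rfl
  rw [hdiag 0, hdiag 1, hdiag 2, Fin.sum_univ_three, lapl, lapl, lapl]
  simp only [hVx]
  simp [gradq, qmk_smul, qmk_star, qmk_add, qmk_sub, qmk_mul]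
  field_simp
  ring

end
end

section
/- Let H be a real Hilbert space, let S : H → H be a continuous linear map with a continuous linear inverse, and let A ⊆ H be a closed linear subspace such that S(S*(A)) = A (the image of A under SS* is exactly A). Let P denote the orthogonal projection of H onto A. Then the orthogonal projection of H onto the closed subspace S⁻¹(A) is given by the composition S* ∘ P ∘ (S*)⁻¹; that is, for every x ∈ H, the orthogonal projection of x onto S⁻¹(A) equals S*( P( (S*)⁻¹(x) ) ). -/
open RealInnerProductSpace

/-- if `S` is an invertible continuous linear map on a real Hilbert space and
`A` is a closed subspace with `S(S*(A)) = A`, then the orthogonal projection onto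
`S⁻¹(A)` is `S* ∘ P ∘ (S*)⁻¹`, where `P` is the orthogonal projection onto `A`
(note `(S*)⁻¹ = (S⁻¹)*`). -/
theorem vekua_projection_abstract {H : Type*} [NormedAddCommGroup H]
    [InnerProductSpace ℝ H] [CompleteSpace H]
    (S : H ≃L[ℝ] H) (A : Submodule ℝ H) (hA : IsClosed (A : Set H))
    [CompleteSpace A]
    [CompleteSpace (Submodule.comap ((S : H →L[ℝ] H) : H →ₗ[ℝ] H) A)]
    (hSSA : (fun a => S (ContinuousLinearMap.adjoint (S : H →L[ℝ] H) a)) ''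
        (A : Set H) = (A : Set H)) :
    ∀ x : H,
      ((Submodule.orthogonalProjection (Submodule.comap ((S : H →L[ℝ] H) : H →ₗ[ℝ] H) A) x : H)) =
        (ContinuousLinearMap.adjoint (S : H →L[ℝ] H))
          ((Submodule.orthogonalProjection A
            ((ContinuousLinearMap.adjoint ((S.symm : H →L[ℝ] H))) x) : H)) := by
  intro x
  set T := ContinuousLinearMap.adjoint (S : H →L[ℝ] H)
  set y := (ContinuousLinearMap.adjoint ((S.symm : H →L[ℝ] H))) x
  have hxy : T y = x := by
    have : T.comp (ContinuousLinearMap.adjoint ((S.symm : H →L[ℝ] H))) =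
        ContinuousLinearMap.id ℝ H := by
      rw [← ContinuousLinearMap.adjoint_comp]
      have : (S.symm : H →L[ℝ] H).comp (S : H →L[ℝ] H) = ContinuousLinearMap.id ℝ H := by
        ext z; simp
      rw [this, ContinuousLinearMap.adjoint_id]
    calc T y = (T.comp (ContinuousLinearMap.adjoint ((S.symm : H →L[ℝ] H)))) x := rfl
      _ = x := by rw [this]; rfl
  apply Submodule.eq_starProjection_of_mem_of_inner_eq_zero
  · -- T (P y) ∈ comap S A
    have hPy : (Submodule.orthogonalProjection A y : H) ∈ A := (Submodule.orthogonalProjection A y).2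
    have : S (T (Submodule.orthogonalProjection A y : H)) ∈ A := by
      have := hSSA ▸ Set.mem_image_of_mem _ hPy
      exact this
    exact this
  · intro w hw
    have hw' : S w ∈ A := hw
    have : x - T (Submodule.orthogonalProjection A y : H) = T (y - (Submodule.orthogonalProjection A y : H)) := by
      rw [map_sub, hxy]
    rw [this, ContinuousLinearMap.adjoint_inner_left]
    exact Submodule.starProjection_inner_eq_zero y (S w) hw'
end

section
/- Let H be a real Hilbert space, let S : H → H be a continuous linear map with a continuous linear inverse, and let A ⊆ H be a closed linear subspace such that S(S*(A)) = A (the image of A under SS* is exactly A). Let P denote the orthogonal projection of H onto A. Then the orthogonal projection of H onto the closed subspace S⁻¹(A) is also given by S⁻¹ ∘ P ∘ S; that is, for every x ∈ H, the orthogonal projection of x onto S⁻¹(A) equals S⁻¹( P( S(x) ) ), and consequently S*( P( (S*)⁻¹(x) ) ) = S⁻¹( P( S(x) ) ) for all x ∈ H. -/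
open RealInnerProductSpace


/-- under the hypotheses of Statement 16, the orthogonal projection onto
`S⁻¹(A)` is also given by `S⁻¹ ∘ P ∘ S`, and consequently
`S*(P((S*)⁻¹ x)) = S⁻¹(P(S x))` for all `x` (note `(S*)⁻¹ = (S⁻¹)*`). -/
theorem vekua_projection_abstract' {H : Type*} [NormedAddCommGroup H]
    [InnerProductSpace ℝ H] [CompleteSpace H]
    (S : H ≃L[ℝ] H) (A : Submodule ℝ H) (hA : IsClosed (A : Set H))
    [CompleteSpace A]
    [CompleteSpace (Submodule.comap ((S : H →L[ℝ] H) : H →ₗ[ℝ] H) A)]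
    (hSSA : (fun a => S (ContinuousLinearMap.adjoint (S : H →L[ℝ] H) a)) ''
        (A : Set H) = (A : Set H)) :
    (∀ x : H,
      ((Submodule.orthogonalProjectionOnto (Submodule.comap ((S : H →L[ℝ] H) : H →ₗ[ℝ] H) A) x : H)) =
        S.symm ((Submodule.orthogonalProjectionOnto A (S x) : H))) ∧
    (∀ x : H,
      (ContinuousLinearMap.adjoint (S : H →L[ℝ] H))
          ((Submodule.orthogonalProjectionOnto A
            ((ContinuousLinearMap.adjoint ((S.symm : H →L[ℝ] H))) x) : H)) =
        S.symm ((Submodule.orthogonalProjectionOnto A (S x) : H))) := by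
  set T := ContinuousLinearMap.adjoint (S : H →L[ℝ] H) with hT
  set K := Submodule.comap ((S : H →L[ℝ] H) : H →ₗ[ℝ] H) A with hK
  -- every element of A is S (T a) for some a ∈ A
  have hsurj : ∀ b ∈ A, ∃ a ∈ A, S (T a) = b := by
    intro b hb
    have : b ∈ (fun a => S (T a)) '' (A : Set H) := by rw [hSSA]; exact hb
    obtain ⟨a, ha, hab⟩ := this
    exact ⟨a, ha, hab⟩
  have hmem : ∀ a ∈ A, S (T a) ∈ A := by
    intro a ha
    have : S (T a) ∈ (fun a => S (T a)) '' (A : Set H) := ⟨a, ha, rfl⟩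
    rwa [hSSA] at this
  -- every element of K has the form T a with a ∈ A
  have hKform : ∀ w ∈ K, ∃ a ∈ A, w = T a := by
    intro w hw
    obtain ⟨a, ha, hab⟩ := hsurj (S w) hw
    exact ⟨a, ha, (S.injective hab).symm⟩
  have key1 : ∀ x : H, (Submodule.orthogonalProjectionOnto K x : H) =
      S.symm ((Submodule.orthogonalProjectionOnto A (S x) : H)) := by
    intro x
    apply Submodule.eq_starProjection_of_mem_of_inner_eq_zero
    · show S (S.symm _) ∈ A
      rw [S.apply_symm_apply]
      exact (Submodule.orthogonalProjectionOnto A (S x)).2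
    · intro w hw
      obtain ⟨a, ha, rfl⟩ := hKform w hw
      have horth : (S x : H) - Submodule.orthogonalProjectionOnto A (S x) ∈ Aᗮ :=
        Submodule.sub_starProjection_mem_orthogonal _
      have := (Submodule.mem_orthogonal' A _).1 horth a ha
      have h2 : (S : H →L[ℝ] H) (x - S.symm ((Submodule.orthogonalProjectionOnto A (S x) : H)))
          = S x - (Submodule.orthogonalProjectionOnto A (S x) : H) := by
        rw [map_sub]; simp
      rw [hT, ContinuousLinearMap.adjoint_inner_right, h2]
      exact this
  refine ⟨key1, fun x => ?_⟩
  rw [← key1 x]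
  symm
  apply Submodule.eq_starProjection_of_mem_of_inner_eq_zero
  · show (S : H →L[ℝ] H) (T _) ∈ A
    exact hmem _ (Submodule.orthogonalProjectionOnto A _).2
  · intro w hw
    obtain ⟨a, ha, rfl⟩ := hKform w hw
    set y := (ContinuousLinearMap.adjoint ((S.symm : H →L[ℝ] H))) x with hy
    have hxy : T y = x := by
      rw [hy, hT, ← ContinuousLinearMap.comp_apply, ← ContinuousLinearMap.adjoint_comp]
      have : (S.symm : H →L[ℝ] H) ∘L (S : H →L[ℝ] H) = ContinuousLinearMap.id ℝ H := by
        ext z; simp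
      rw [this, ContinuousLinearMap.adjoint_id, ContinuousLinearMap.id_apply]
    have horth : y - Submodule.orthogonalProjectionOnto A y ∈ Aᗮ :=
      Submodule.sub_starProjection_mem_orthogonal _
    have h0 : (inner ℝ (y - (Submodule.orthogonalProjectionOnto A y : H)) (S (T a)) : ℝ) = 0 :=
      (Submodule.mem_orthogonal' A _).1 horth _ (hmem a ha)
    have h2 : x - T ((Submodule.orthogonalProjectionOnto A y : H))
        = T (y - (Submodule.orthogonalProjectionOnto A y : H)) := by rw [map_sub, hxy]
    rw [h2, hT, ContinuousLinearMap.adjoint_inner_left]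
    exact h0
end
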